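/- arXiv:2007.01512 — 9 statements merged into one kernel-verified Lean document; each statement's English description precedes it below -/
import Mathlib

section
/- Let d ≥ 1 and let 0 < r₁ < r₂. Let φ : ℝ^d → [0,∞) be measurable and bounded with inf_{|x| ≤ r₁} φ(x) > 0 and φ(x) = 0 for |x| > r₂. Then there exists a constant C, depending only on d and φ, such that for every nonnegative integrable function ρ : ℝ^d → [0,∞) and every y ∈ ℝ^d one has ∫_{ℝ^d} (ρ(x) / (φ*ρ)(x)) · φ(x−y) dx ≤ C, where the integrand is taken to be 0 at every point x with (φ*ρ)(x) = 0. -/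
open MeasureTheory
open scoped ENNReal

abbrev Euc (d : ℕ) : Type := EuclideanSpace ℝ (Fin d)

/-- The key inequality underlying the control of the Motsch–Tadmor local
average velocity: for `φ ≥ 0` bounded, bounded below on the ball of radius `r₁` and
supported in the ball of radius `r₂`, there is a constant `C = C(d, φ)` such that for every
nonnegative integrable `ρ` and every `y`, `∫ ρ(x)/(φ*ρ)(x) · φ(x−y) dx ≤ C` (with the
integrand taken to be `0` where `(φ*ρ)(x) = 0`). -/
theorem stmt0 (d : ℕ) (hd : 1 ≤ d) (r₁ r₂ : ℝ) (hr₁ : 0 < r₁) (hr₁₂ : r₁ < r₂)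
    (φ : Euc d → ℝ) (hφmeas : Measurable φ) (hφnonneg : ∀ x, 0 ≤ φ x)
    (hφbdd : ∃ M : ℝ, ∀ x, φ x ≤ M)
    (hφinf : ∃ c : ℝ, 0 < c ∧ ∀ x, ‖x‖ ≤ r₁ → c ≤ φ x)
    (hφsupp : ∀ x, r₂ < ‖x‖ → φ x = 0) :
    ∃ C : ℝ, ∀ ρ : Euc d → ℝ, Measurable ρ → (∀ x, 0 ≤ ρ x) → Integrable ρ →
      ∀ y : Euc d,
        (∫⁻ x, ENNReal.ofReal
          (if (∫ z, φ (x - z) * ρ z) = 0 then 0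
           else ρ x / (∫ z, φ (x - z) * ρ z) * φ (x - y)))
          ≤ ENNReal.ofReal C := by
  obtain ⟨M, hM⟩ := hφbdd
  obtain ⟨c, hc, hcφ⟩ := hφinf
  have hcM : c ≤ M := le_trans (hcφ 0 (by simp [hr₁.le])) (hM 0)
  have hM0 : 0 < M := lt_of_lt_of_le hc hcM
  -- finite cover of the closed ball of radius r₂ by balls of radius r₁/2
  obtain ⟨t, ht⟩ := (isCompact_closedBall (0 : Euc d) r₂).elim_finite_subcover
    (fun p : Euc d => Metric.ball p (r₁ / 2)) (fun _ => Metric.isOpen_ball)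
    (fun x _ => Set.mem_iUnion.2 ⟨x, Metric.mem_ball_self (by linarith)⟩)
  refine ⟨(t.card : ℝ) * (M / c), ?_⟩
  intro ρ hρmeas hρnonneg hρint y
  set h : Euc d → ℝ := fun x => ∫ z, φ (x - z) * ρ z with hh
  have hmeas_h : Measurable h := by
    have hF : StronglyMeasurable (fun q : Euc d × Euc d => φ (q.1 - q.2) * ρ q.2) :=
      ((hφmeas.comp (measurable_fst.sub measurable_snd)).mul
        (hρmeas.comp measurable_snd)).stronglyMeasurable
    exact hF.integral_prod_right'.measurable
  set g : Euc d → ℝ := fun x => if h x = 0 then 0 else ρ x / h x * φ (x - y) with hg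
  have hg_nonneg : ∀ x, 0 ≤ g x := by
    intro x
    by_cases hx : h x = 0
    · simp [hg, hx]
    · simp only [hg, hx, if_false]
      by_cases hx' : 0 ≤ h x
      · exact mul_nonneg (div_nonneg (hρnonneg x) hx') (hφnonneg _)
      · -- h x ≥ 0 always in fact
        exact absurd (integral_nonneg fun z => mul_nonneg (hφnonneg _) (hρnonneg _)) hx'
  have hg_meas : Measurable g := by
    refine Measurable.ite (hmeas_h (measurableSet_singleton 0)) measurable_const ?_
    exact (hρmeas.div hmeas_h).mul (hφmeas.comp (measurable_id.sub measurable_const))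
  have main : (∫⁻ x, ENNReal.ofReal (g x)) ≤ ENNReal.ofReal ((t.card : ℝ) * (M / c)) := by
    -- pointwise bound by sum of indicators over the covering balls (translated by y)
    have hpt : ∀ x, ENNReal.ofReal (g x) ≤
        ∑ p ∈ t, (Metric.ball (y + p) (r₁ / 2)).indicator
          (fun x => ENNReal.ofReal (g x)) x := by
      intro x
      by_cases hxy : ‖x - y‖ ≤ r₂
      · have hmem : x - y ∈ Metric.closedBall (0 : Euc d) r₂ := by
          simpa [Metric.mem_closedBall, dist_zero_right] using hxy
        obtain ⟨p, hp, hxp⟩ := Set.mem_iUnion₂.1 (ht hmem)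
        have hxball : x ∈ Metric.ball (y + p) (r₁ / 2) := by
          have : dist x (y + p) = ‖x - y - p‖ := by
            rw [dist_eq_norm, sub_add_eq_sub_sub]
          simpa [Metric.mem_ball, this] using (by simpa [Metric.mem_ball, dist_eq_norm] using hxp)
        calc ENNReal.ofReal (g x)
            = (Metric.ball (y + p) (r₁ / 2)).indicator
                (fun x => ENNReal.ofReal (g x)) x := by
              rw [Set.indicator_of_mem hxball]
          _ ≤ _ := Finset.single_le_sum (f := fun p =>
                (Metric.ball (y + p) (r₁ / 2)).indicator (fun x => ENNReal.ofReal (g x)) x)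
                (fun _ _ => zero_le) hp
      · have : g x = 0 := by
          have hφ0 : φ (x - y) = 0 := hφsupp _ (lt_of_not_ge hxy)
          by_cases hx : h x = 0 <;> simp [hg, hx, hφ0]
        simp [this]
    have key : ∀ p ∈ t,
        (∫⁻ x in Metric.ball (y + p) (r₁ / 2), ENNReal.ofReal (g x)) ≤
          ENNReal.ofReal (M / c) := by
      intro p _
      set B := Metric.ball (y + p) (r₁ / 2) with hB
      set I : ℝ := ∫ z in B, ρ z with hI
      have hInonneg : 0 ≤ I := integral_nonneg fun z => hρnonneg z
      by_cases hI0 : I = 0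
      · -- ρ = 0 a.e. on B, hence g = 0 a.e. on B
        have hae : ρ =ᵐ[volume.restrict B] 0 := by
          have := (integral_eq_zero_iff_of_nonneg (μ := volume.restrict B)
            (fun z => hρnonneg z) hρint.integrableOn).1 hI0
          exact this
        have hgae : (fun x => ENNReal.ofReal (g x)) =ᵐ[volume.restrict B] 0 := by
          filter_upwards [hae] with x hx
          by_cases hhx : h x = 0 <;> simp [hg, hhx, hx]
        rw [lintegral_congr_ae hgae]
        simp
      · have hIpos : 0 < I := lt_of_le_of_ne hInonneg (Ne.symm hI0)
        -- on B, h x ≥ c * I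
        have hhx : ∀ x ∈ B, c * I ≤ h x := by
          intro x hx
          have hint : Integrable (fun z => φ (x - z) * ρ z) := by
            refine Integrable.mono' (hρint.const_mul M)
              (((hφmeas.comp (measurable_const.sub measurable_id)).mul hρmeas).aestronglyMeasurable) ?_
            · filter_upwards with z
              rw [Real.norm_eq_abs, abs_of_nonneg (mul_nonneg (hφnonneg _) (hρnonneg _))]
              exact mul_le_mul_of_nonneg_right (hM _) (hρnonneg z)
          have h1 : (∫ z in B, φ (x - z) * ρ z) ≤ h x := by
            refine setIntegral_le_integral hint ?_
            filter_upwards with z; exact mul_nonneg (hφnonneg _) (hρnonneg _)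
          have h2 : c * I ≤ ∫ z in B, φ (x - z) * ρ z := by
            have : (∫ z in B, c * ρ z) ≤ ∫ z in B, φ (x - z) * ρ z := by
              refine setIntegral_mono_on (hρint.integrableOn.const_mul c)
                hint.integrableOn measurableSet_ball ?_
              intro z hz
              have hxz : ‖x - z‖ ≤ r₁ := by
                have hdx : dist x (y + p) < r₁ / 2 := hx
                have hdz : dist z (y + p) < r₁ / 2 := hz
                have : dist x z < r₁ := by
                  calc dist x z ≤ dist x (y + p) + dist (y + p) z := dist_triangle _ _ _
                    _ < r₁ / 2 + r₁ / 2 := by rw [dist_comm (y + p) z]; linarith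
                    _ = r₁ := by ring
                rw [← dist_eq_norm]; exact this.le
              exact mul_le_mul_of_nonneg_right (hcφ _ hxz) (hρnonneg z)
            calc c * I = ∫ z in B, c * ρ z := (integral_const_mul c ρ).symm
              _ ≤ _ := this
          linarith
        have hcI : 0 < c * I := mul_pos hc hIpos
        -- pointwise bound g x ≤ (M / (c*I)) * ρ x on B
        have hbd : ∀ x ∈ B, g x ≤ M / (c * I) * ρ x := by
          intro x hx
          by_cases hhx0 : h x = 0
          · simp only [hg, hhx0, if_true]
            exact mul_nonneg (div_nonneg hM0.le hcI.le) (hρnonneg x)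
          · simp only [hg, hhx0, if_false]
            have hhpos : 0 < h x := lt_of_lt_of_le hcI (hhx x hx)
            calc ρ x / h x * φ (x - y) ≤ ρ x / (c * I) * M := by
                  refine mul_le_mul ?_ (hM _) (hφnonneg _)
                    (div_nonneg (hρnonneg x) hcI.le)
                  gcongr
                  · exact hρnonneg x
                  · exact hhx x hx
              _ = M / (c * I) * ρ x := by ring
        -- integrate
        calc (∫⁻ x in B, ENNReal.ofReal (g x))
            ≤ ∫⁻ x in B, ENNReal.ofReal (M / (c * I)) * ENNReal.ofReal (ρ x) := by
              refine setLIntegral_mono (by fun_prop) ?_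
              intro x hx
              rw [← ENNReal.ofReal_mul (div_nonneg hM0.le hcI.le)]
              exact ENNReal.ofReal_le_ofReal (hbd x hx)
          _ = ENNReal.ofReal (M / (c * I)) * ∫⁻ x in B, ENNReal.ofReal (ρ x) := by
              rw [lintegral_const_mul _ (by fun_prop)]
          _ = ENNReal.ofReal (M / (c * I)) * ENNReal.ofReal I := by
              rw [← ofReal_integral_eq_lintegral_ofReal hρint.integrableOn
                (by filter_upwards with z; exact hρnonneg z)]
          _ = ENNReal.ofReal (M / c) := by
              rw [← ENNReal.ofReal_mul (div_nonneg hM0.le hcI.le)]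
              congr 1
              field_simp
          _ ≤ ENNReal.ofReal (M / c) := le_rfl
    calc (∫⁻ x, ENNReal.ofReal (g x))
        ≤ ∫⁻ x, ∑ p ∈ t, (Metric.ball (y + p) (r₁ / 2)).indicator
            (fun x => ENNReal.ofReal (g x)) x := lintegral_mono hpt
      _ = ∑ p ∈ t, ∫⁻ x, (Metric.ball (y + p) (r₁ / 2)).indicator
            (fun x => ENNReal.ofReal (g x)) x := by
          refine lintegral_finset_sum _ ?_
          intro p _
          exact (ENNReal.measurable_ofReal.comp hg_meas).indicator measurableSet_ball
      _ = ∑ p ∈ t, ∫⁻ x in Metric.ball (y + p) (r₁ / 2), ENNReal.ofReal (g x) := by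
          refine Finset.sum_congr rfl fun p _ => ?_
          rw [lintegral_indicator measurableSet_ball]
      _ ≤ ∑ p ∈ t, ENNReal.ofReal (M / c) := Finset.sum_le_sum key
      _ = (t.card : ℝ≥0∞) * ENNReal.ofReal (M / c) := by
          rw [Finset.sum_const, nsmul_eq_mul]
      _ = ENNReal.ofReal ((t.card : ℝ) * (M / c)) := by
          rw [ENNReal.ofReal_mul (by positivity), ENNReal.ofReal_natCast]
  exact main
end

section
/- Let d ≥ 1, let 0 < r₁ < r₂, and let φ : ℝ^d → [0,∞) be measurable and bounded with inf_{|x| ≤ r₁} φ(x) > 0 and φ(x) = 0 for |x| > r₂. Let R > 0 and let θ_R : ℝ^d → ℝ^d be measurable with |θ_R(w)| ≤ |w| for all w. Then there exists a constant C, depending only on d and φ (in particular not on R, p or f), such that for every p ≥ 1 and every integrable f : ℝ^d × ℝ^d → [0,∞) with ∫ |v|^p f(x,v) dx dv < ∞, one has ∫_{ℝ^{2d}} |u_R[f](x)|^p f(x,v) dx dv ≤ C ∫_{ℝ^{2d}} |v|^p f(x,v) dx dv. -/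
open MeasureTheory
open scoped ENNReal

/-- The regularized Motsch–Tadmor local average velocity
`u_R[f](x) = (∫ φ(x−y) θ_R(w) f(y,w) dy dw) / (R⁻¹ + ∫ φ(x−y) f(y,w) dy dw)`. -/
noncomputable def uReg (d : ℕ) (R : ℝ) (φ : Euc d → ℝ) (θR : Euc d → Euc d)
    (f : Euc d × Euc d → ℝ) (x : Euc d) : Euc d :=
  (R⁻¹ + ∫ ζ : Euc d × Euc d, φ (x - ζ.1) * f ζ)⁻¹ •
    ∫ ζ : Euc d × Euc d, (φ (x - ζ.1) * f ζ) • θR ζ.2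

lemma hoelder_lint {α : Type*} [MeasurableSpace α] (μ : Measure α) (G W : α → ℝ≥0∞)
    (hG : AEMeasurable G μ) (hW : AEMeasurable W μ) (p : ℝ) (hp : 1 ≤ p) :
    (∫⁻ a, G a * W a ∂μ) ^ p ≤ (∫⁻ a, G a ∂μ) ^ (p - 1) * ∫⁻ a, G a * W a ^ p ∂μ := by
  rcases eq_or_lt_of_le hp with h1 | h1
  · simp [← h1]
  have hp0 : (0:ℝ) < p := lt_trans one_pos h1
  set q : ℝ := p / (p - 1) with hqdef
  have hpq : p.HolderConjugate q := Real.HolderConjugate.conjExponent h1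
  have hqp : q.HolderConjugate p := hpq.symm
  have hq0 : 0 < q := by rw [hqdef]; exact div_pos hp0 (by linarith)
  have hsum : 1 / q + 1 / p = 1 := by
    have := hqp.inv_add_inv_eq_one
    simpa [one_div] using this
  have hf : AEMeasurable (fun a => G a ^ (1/q)) μ := hG.pow_const _
  have hg : AEMeasurable (fun a => G a ^ (1/p) * W a) μ := (hG.pow_const _).mul hW
  have H := ENNReal.lintegral_mul_le_Lp_mul_Lq μ hqp hf hg
  have h1' : ∫⁻ a, ((fun a => G a ^ (1/q)) * fun a => G a ^ (1/p) * W a) a ∂μ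
      = ∫⁻ a, G a * W a ∂μ := by
    refine lintegral_congr fun a => ?_
    simp only [Pi.mul_apply]
    rw [← mul_assoc, ← ENNReal.rpow_add_of_nonneg _ _ (by positivity) (by positivity), hsum,
      ENNReal.rpow_one]
  have h2' : ∫⁻ a, (G a ^ (1/q)) ^ q ∂μ = ∫⁻ a, G a ∂μ := by
    refine lintegral_congr fun a => ?_
    rw [← ENNReal.rpow_mul, one_div_mul_cancel (ne_of_gt hq0), ENNReal.rpow_one]
  have h3' : ∫⁻ a, (G a ^ (1/p) * W a) ^ p ∂μ = ∫⁻ a, G a * W a ^ p ∂μ := by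
    refine lintegral_congr fun a => ?_
    rw [ENNReal.mul_rpow_of_nonneg _ _ (le_of_lt hp0), ← ENNReal.rpow_mul,
      one_div_mul_cancel (ne_of_gt hp0), ENNReal.rpow_one]
  rw [h1', h2', h3'] at H
  calc (∫⁻ a, G a * W a ∂μ) ^ p
      ≤ ((∫⁻ a, G a ∂μ) ^ (1/q) * (∫⁻ a, G a * W a ^ p ∂μ) ^ (1/p)) ^ p :=
        ENNReal.rpow_le_rpow H (le_of_lt hp0)
    _ = (∫⁻ a, G a ∂μ) ^ (p - 1) * ∫⁻ a, G a * W a ^ p ∂μ := by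
        rw [ENNReal.mul_rpow_of_nonneg _ _ (le_of_lt hp0), ← ENNReal.rpow_mul,
          ← ENNReal.rpow_mul, one_div_mul_cancel (ne_of_gt hp0), ENNReal.rpow_one]
        congr 2
        rw [hqdef]
        field_simp

set_option maxHeartbeats 2000000 in
/-- Proposition `ineq_u`: there is a constant `C = C(d, φ)`, independent of
`R`, `θ_R`, `p` and `f`, such that `∫ |u_R[f](x)|^p f(x,v) dz ≤ C ∫ |v|^p f(x,v) dz`. -/
theorem stmt1 (d : ℕ) (hd : 1 ≤ d) (r₁ r₂ : ℝ) (hr₁ : 0 < r₁) (hr₁₂ : r₁ < r₂)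
    (φ : Euc d → ℝ) (hφmeas : Measurable φ) (hφnonneg : ∀ x, 0 ≤ φ x)
    (hφbdd : ∃ M : ℝ, ∀ x, φ x ≤ M)
    (hφinf : ∃ c : ℝ, 0 < c ∧ ∀ x, ‖x‖ ≤ r₁ → c ≤ φ x)
    (hφsupp : ∀ x, r₂ < ‖x‖ → φ x = 0) :
    ∃ C : ℝ, ∀ R : ℝ, 0 < R → ∀ θR : Euc d → Euc d, Measurable θR →
      (∀ w, ‖θR w‖ ≤ ‖w‖) →
      ∀ p : ℝ, 1 ≤ p →
      ∀ f : Euc d × Euc d → ℝ, Measurable f → (∀ z, 0 ≤ f z) → Integrable f →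
      (∫⁻ z : Euc d × Euc d, ENNReal.ofReal (‖z.2‖ ^ p * f z)) < ⊤ →
      (∫⁻ z : Euc d × Euc d, ENNReal.ofReal (‖uReg d R φ θR f z.1‖ ^ p * f z))
        ≤ ENNReal.ofReal C *
          ∫⁻ z : Euc d × Euc d, ENNReal.ofReal (‖z.2‖ ^ p * f z) := by
  classical
  obtain ⟨M, hM⟩ := hφbdd
  obtain ⟨c, hc0, hcφ⟩ := hφinf
  have hM0 : 0 ≤ M := le_trans (hφnonneg 0) (hM 0)
  obtain ⟨t, ht⟩ : ∃ t : Finset (Euc d),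
      Metric.closedBall (0 : Euc d) r₂ ⊆ ⋃ z ∈ t, Metric.ball z (r₁ / 2) :=
    (isCompact_closedBall (0 : Euc d) r₂).elim_finite_subcover _
      (fun z => Metric.isOpen_ball)
      (fun x _ => Set.mem_iUnion.2 ⟨x, Metric.mem_ball_self (by positivity)⟩)
  refine ⟨M * t.card / c, ?_⟩
  intro R hR θR hθmeas hθ p hp f hfmeas hf0 hfInt hfin
  have hp0 : (0:ℝ) < p := lt_of_lt_of_le one_pos hp
  have hofReal_f : Measurable fun z : Euc d × Euc d => ENNReal.ofReal (f z) :=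
    ENNReal.measurable_ofReal.comp hfmeas
  have hWmeas : Measurable fun ζ : Euc d × Euc d => ENNReal.ofReal ‖ζ.2‖ :=
    ENNReal.measurable_ofReal.comp measurable_snd.norm
  -- the weight on the right-hand side
  set F : Euc d × Euc d → ℝ≥0∞ :=
    fun ζ => ENNReal.ofReal (f ζ) * ENNReal.ofReal ‖ζ.2‖ ^ p with hFdef
  have hFmeas : Measurable F := hofReal_f.mul (hWmeas.pow_const p)
  have hFrhs : ∀ z : Euc d × Euc d, ENNReal.ofReal (‖z.2‖ ^ p * f z) = F z := by
    intro z
    rw [hFdef, ENNReal.ofReal_mul (by positivity),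
      ← ENNReal.ofReal_rpow_of_nonneg (norm_nonneg _) hp0.le, mul_comm]
  have hGmeas : Measurable fun w : Euc d × (Euc d × Euc d) =>
      ENNReal.ofReal (φ (w.1 - w.2.1)) * ENNReal.ofReal (f w.2) :=
    (ENNReal.measurable_ofReal.comp
      (hφmeas.comp (measurable_fst.sub (measurable_snd.fst)))).mul
      (hofReal_f.comp measurable_snd)
  set ρ : Euc d → ℝ≥0∞ := fun x => ∫⁻ v, ENNReal.ofReal (f (x, v)) with hρdef
  have hρmeas : Measurable ρ := hofReal_f.lintegral_prod_right'
  set A : Euc d → ℝ≥0∞ :=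
    fun x => ∫⁻ ζ : Euc d × Euc d, ENNReal.ofReal (φ (x - ζ.1)) * ENNReal.ofReal (f ζ)
    with hAdef
  have hAmeas : Measurable A := hGmeas.lintegral_prod_right'
  set den : Euc d → ℝ≥0∞ := fun x => ENNReal.ofReal R⁻¹ + A x with hdendef
  have hdenmeas : Measurable den := measurable_const.add hAmeas
  set Bp : Euc d → ℝ≥0∞ := fun x => ∫⁻ ζ : Euc d × Euc d,
      (ENNReal.ofReal (φ (x - ζ.1)) * ENNReal.ofReal (f ζ)) * ENNReal.ofReal ‖ζ.2‖ ^ p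
    with hBdef
  have hBmeas : Measurable Bp :=
    (hGmeas.mul ((hWmeas.pow_const p).comp measurable_snd)).lintegral_prod_right'
  -- integrability of |v|^p f
  have hIntg : Integrable (fun z : Euc d × Euc d => ‖z.2‖ ^ p * f z) := by
    constructor
    · exact ((measurable_snd.norm.pow_const p).mul hfmeas).aestronglyMeasurable
    · rw [hasFiniteIntegral_iff_ofReal (ae_of_all _ fun z =>
          mul_nonneg (Real.rpow_nonneg (norm_nonneg _) p) (hf0 z))]
      exact hfin
  have hφf_int : ∀ x : Euc d, Integrable (fun ζ : Euc d × Euc d => φ (x - ζ.1) * f ζ) :=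
    fun x => hfInt.bdd_mul (c := M)
      ((hφmeas.comp (measurable_const.sub measurable_fst)).aestronglyMeasurable)
      (ae_of_all _ fun ζ => by rw [Real.norm_eq_abs, abs_of_nonneg (hφnonneg _)]; exact hM _)
  have hDpos : ∀ x : Euc d, 0 < R⁻¹ + ∫ ζ : Euc d × Euc d, φ (x - ζ.1) * f ζ := fun x =>
    add_pos_of_pos_of_nonneg (inv_pos.2 hR)
      (integral_nonneg fun ζ => mul_nonneg (hφnonneg _) (hf0 _))
  have hden_eq : ∀ x : Euc d,
      den x = ENNReal.ofReal (R⁻¹ + ∫ ζ : Euc d × Euc d, φ (x - ζ.1) * f ζ) := by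
    intro x
    rw [ENNReal.ofReal_add (inv_nonneg.2 hR.le)
        (integral_nonneg fun ζ => mul_nonneg (hφnonneg _) (hf0 _)),
      ofReal_integral_eq_lintegral_ofReal (hφf_int x)
        (ae_of_all _ fun ζ => mul_nonneg (hφnonneg _) (hf0 _))]
    have h2 : (∫⁻ ζ : Euc d × Euc d, ENNReal.ofReal (φ (x - ζ.1) * f ζ)) = A x :=
      lintegral_congr fun ζ => (ENNReal.ofReal_mul (hφnonneg _))
    rw [h2]
  have hden_ne_top : ∀ x, den x ≠ ⊤ := fun x => by
    rw [hden_eq x]; exact ENNReal.ofReal_ne_top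
  have hden_ne_zero : ∀ x, den x ≠ 0 := fun x =>
    (lt_of_lt_of_le (ENNReal.ofReal_pos.2 (inv_pos.2 hR)) (le_add_right le_rfl)).ne'
  -- pointwise estimate
  have hpt : ∀ x : Euc d,
      ENNReal.ofReal (‖uReg d R φ θR f x‖ ^ p) ≤ Bp x / den x := by
    intro x
    have hDpos' : 0 < R⁻¹ + ∫ ζ : Euc d × Euc d, φ (x - ζ.1) * f ζ := hDpos x
    have hu : ‖uReg d R φ θR f x‖
        = (R⁻¹ + ∫ ζ : Euc d × Euc d, φ (x - ζ.1) * f ζ)⁻¹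
          * ‖∫ ζ : Euc d × Euc d, (φ (x - ζ.1) * f ζ) • θR ζ.2‖ := by
      rw [uReg, norm_smul, Real.norm_eq_abs, abs_of_pos (inv_pos.2 hDpos')]
    have hbound : ∀ ζ : Euc d × Euc d,
        ‖(φ (x - ζ.1) * f ζ) • θR ζ.2‖ ≤ M * (f ζ + ‖ζ.2‖ ^ p * f ζ) := by
      intro ζ
      rw [norm_smul, Real.norm_eq_abs, abs_of_nonneg (mul_nonneg (hφnonneg _) (hf0 _))]
      have h1 : ‖θR ζ.2‖ ≤ 1 + ‖ζ.2‖ ^ p := by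
        refine le_trans (hθ ζ.2) ?_
        rcases le_or_gt ‖ζ.2‖ 1 with h | h
        · have h2 : (0:ℝ) ≤ ‖ζ.2‖ ^ p := Real.rpow_nonneg (norm_nonneg _) p
          linarith
        · calc ‖ζ.2‖ = ‖ζ.2‖ ^ (1:ℝ) := (Real.rpow_one _).symm
            _ ≤ ‖ζ.2‖ ^ p := Real.rpow_le_rpow_of_exponent_le h.le hp
            _ ≤ 1 + ‖ζ.2‖ ^ p := by linarith
      have h2 : φ (x - ζ.1) * ‖θR ζ.2‖ ≤ M * (1 + ‖ζ.2‖ ^ p) :=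
        mul_le_mul (hM _) h1 (norm_nonneg _) hM0
      have h3 := mul_le_mul_of_nonneg_right h2 (hf0 ζ)
      calc φ (x - ζ.1) * f ζ * ‖θR ζ.2‖ = φ (x - ζ.1) * ‖θR ζ.2‖ * f ζ := by ring
        _ ≤ M * (1 + ‖ζ.2‖ ^ p) * f ζ := h3
        _ = M * (f ζ + ‖ζ.2‖ ^ p * f ζ) := by ring
    have hIntN : Integrable (fun ζ : Euc d × Euc d => (φ (x - ζ.1) * f ζ) • θR ζ.2) := by
      refine Integrable.mono' ((hfInt.add hIntg).const_mul M) ?_ (ae_of_all _ hbound)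
      exact (((hφmeas.comp (measurable_const.sub measurable_fst)).mul hfmeas).smul
        (hθmeas.comp measurable_snd)).aestronglyMeasurable
    have hN1 : ENNReal.ofReal ‖∫ ζ : Euc d × Euc d, (φ (x - ζ.1) * f ζ) • θR ζ.2‖
        ≤ ∫⁻ ζ : Euc d × Euc d,
            (ENNReal.ofReal (φ (x - ζ.1)) * ENNReal.ofReal (f ζ)) * ENNReal.ofReal ‖ζ.2‖ := by
      calc ENNReal.ofReal ‖∫ ζ : Euc d × Euc d, (φ (x - ζ.1) * f ζ) • θR ζ.2‖
          ≤ ENNReal.ofReal (∫ ζ : Euc d × Euc d, ‖(φ (x - ζ.1) * f ζ) • θR ζ.2‖) :=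
            ENNReal.ofReal_le_ofReal (norm_integral_le_integral_norm _)
        _ = ∫⁻ ζ : Euc d × Euc d, ENNReal.ofReal ‖(φ (x - ζ.1) * f ζ) • θR ζ.2‖ :=
            ofReal_integral_eq_lintegral_ofReal hIntN.norm
              (ae_of_all _ fun ζ => norm_nonneg _)
        _ ≤ _ := by
            refine lintegral_mono fun ζ => ?_
            rw [norm_smul, Real.norm_eq_abs, abs_of_nonneg (mul_nonneg (hφnonneg _) (hf0 _)),
              ENNReal.ofReal_mul (mul_nonneg (hφnonneg _) (hf0 _)),
              ENNReal.ofReal_mul (hφnonneg _)]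
            exact mul_le_mul_right (ENNReal.ofReal_le_ofReal (hθ ζ.2)) _
    have hu' : ENNReal.ofReal ‖uReg d R φ θR f x‖
        ≤ (den x)⁻¹ * ∫⁻ ζ : Euc d × Euc d,
            (ENNReal.ofReal (φ (x - ζ.1)) * ENNReal.ofReal (f ζ)) * ENNReal.ofReal ‖ζ.2‖ := by
      rw [hu, ENNReal.ofReal_mul (inv_nonneg.2 hDpos'.le), ENNReal.ofReal_inv_of_pos hDpos',
        ← hden_eq x]
      exact mul_le_mul_right hN1 _
    have hH := hoelder_lint volume
      (fun ζ : Euc d × Euc d => ENNReal.ofReal (φ (x - ζ.1)) * ENNReal.ofReal (f ζ))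
      (fun ζ : Euc d × Euc d => ENNReal.ofReal ‖ζ.2‖)
      ((ENNReal.measurable_ofReal.comp
        (hφmeas.comp (measurable_const.sub measurable_fst))).mul hofReal_f).aemeasurable
      hWmeas.aemeasurable p hp
    have hAle : A x ≤ den x := le_add_self
    have hd0 : den x ≠ 0 := hden_ne_zero x
    have hdt : den x ≠ ⊤ := hden_ne_top x
    calc ENNReal.ofReal (‖uReg d R φ θR f x‖ ^ p)
        = ENNReal.ofReal ‖uReg d R φ θR f x‖ ^ p :=
          (ENNReal.ofReal_rpow_of_nonneg (norm_nonneg _) hp0.le).symm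
      _ ≤ ((den x)⁻¹ * ∫⁻ ζ : Euc d × Euc d,
            (ENNReal.ofReal (φ (x - ζ.1)) * ENNReal.ofReal (f ζ)) * ENNReal.ofReal ‖ζ.2‖) ^ p :=
          ENNReal.rpow_le_rpow hu' hp0.le
      _ = (den x) ^ (-p) * (∫⁻ ζ : Euc d × Euc d,
            (ENNReal.ofReal (φ (x - ζ.1)) * ENNReal.ofReal (f ζ)) * ENNReal.ofReal ‖ζ.2‖) ^ p := by
          rw [ENNReal.mul_rpow_of_nonneg _ _ hp0.le, ENNReal.inv_rpow, ← ENNReal.rpow_neg]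
      _ ≤ (den x) ^ (-p) * ((den x) ^ (p - 1) * Bp x) := by
          refine mul_le_mul_right (le_trans hH (mul_le_mul_left
            (ENNReal.rpow_le_rpow hAle (by linarith)) _)) _
      _ = Bp x / den x := by
          rw [← mul_assoc, ← ENNReal.rpow_add _ _ hd0 hdt]
          have he : -p + (p - 1) = -1 := by ring
          rw [he, ENNReal.rpow_neg_one, div_eq_mul_inv, mul_comm]
  -- key uniform bound
  have hK : ∀ y : Euc d,
      (∫⁻ x, ρ x * (den x)⁻¹ * ENNReal.ofReal (φ (x - y)))
        ≤ ENNReal.ofReal (M * t.card / c) := by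
    intro y
    have hSmeas : ∀ z : Euc d, MeasurableSet (Metric.ball (y + z) (r₁ / 2)) :=
      fun z => measurableSet_ball
    have hqmeas : Measurable fun x => ρ x * (den x)⁻¹ := hρmeas.mul hdenmeas.inv
    have hc0' : (ENNReal.ofReal c) ≠ 0 := (ENNReal.ofReal_pos.2 hc0).ne'
    -- A as a convolution-type integral
    have hAx : ∀ x : Euc d, A x = ∫⁻ x', ENNReal.ofReal (φ (x - x')) * ρ x' := by
      intro x
      show (∫⁻ ζ : Euc d × Euc d, ENNReal.ofReal (φ (x - ζ.1)) * ENNReal.ofReal (f ζ)) = _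
      have hm1 : Measurable fun ζ : Euc d × Euc d =>
          ENNReal.ofReal (φ (x - ζ.1)) * ENNReal.ofReal (f ζ) :=
        (ENNReal.measurable_ofReal.comp
          (hφmeas.comp (measurable_const.sub measurable_fst))).mul hofReal_f
      rw [Measure.volume_eq_prod, lintegral_prod _ hm1.aemeasurable]
      refine lintegral_congr fun x' => ?_
      show (∫⁻ v, ENNReal.ofReal (φ (x - x')) * ENNReal.ofReal (f (x', v))) = _
      exact lintegral_const_mul'' _ ((hofReal_f.comp measurable_prodMk_left).aemeasurable)
    -- the per-ball bound
    have hball : ∀ z : Euc d,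
        (∫⁻ x, (Metric.ball (y + z) (r₁ / 2)).indicator (fun x' => ρ x' * (den x')⁻¹) x)
          ≤ (ENNReal.ofReal c)⁻¹ := by
      intro z
      set S : Set (Euc d) := Metric.ball (y + z) (r₁ / 2) with hSdef
      set m : ℝ≥0∞ := ∫⁻ x, S.indicator ρ x with hm
      have hlow : ∀ x ∈ S, ENNReal.ofReal c * m ≤ den x := by
        intro x hx
        have h1 : ENNReal.ofReal c * m ≤ A x := by
          rw [hAx x, hm, ← lintegral_const_mul'' _ ((hρmeas.indicator (hSmeas z)).aemeasurable)]
          refine lintegral_mono fun x' => ?_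
          by_cases hx' : x' ∈ S
          · rw [Set.indicator_of_mem hx']
            refine mul_le_mul_left (ENNReal.ofReal_le_ofReal (hcφ _ ?_)) _
            have d1 := Metric.mem_ball.1 hx
            have d2 := Metric.mem_ball.1 hx'
            calc ‖x - x'‖ = dist x x' := (dist_eq_norm _ _).symm
              _ ≤ dist x (y + z) + dist (y + z) x' := dist_triangle _ _ _
              _ ≤ r₁ := by rw [dist_comm (y + z) x']; linarith
          · rw [Set.indicator_of_notMem hx']
            simp
        exact le_trans h1 le_add_self
      calc (∫⁻ x, S.indicator (fun x' => ρ x' * (den x')⁻¹) x)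
          ≤ ∫⁻ x, S.indicator (fun x' => ρ x' * (ENNReal.ofReal c * m)⁻¹) x := by
            refine lintegral_mono fun x => ?_
            by_cases hx : x ∈ S
            · rw [Set.indicator_of_mem hx, Set.indicator_of_mem hx]
              exact mul_le_mul_right (ENNReal.inv_le_inv.2 (hlow x hx)) _
            · rw [Set.indicator_of_notMem hx, Set.indicator_of_notMem hx]
        _ = m * (ENNReal.ofReal c * m)⁻¹ := by
            have hind : ∀ x, S.indicator (fun x' => ρ x' * (ENNReal.ofReal c * m)⁻¹) x
                = S.indicator ρ x * (ENNReal.ofReal c * m)⁻¹ := by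
              intro x
              by_cases hx : x ∈ S <;>
                simp [Set.indicator_of_mem, Set.indicator_of_notMem, hx]
            rw [lintegral_congr hind,
              lintegral_mul_const'' _ ((hρmeas.indicator (hSmeas z)).aemeasurable)]
        _ ≤ (ENNReal.ofReal c)⁻¹ := by
            rw [ENNReal.mul_inv (Or.inl hc0') (Or.inl ENNReal.ofReal_ne_top)]
            calc m * ((ENNReal.ofReal c)⁻¹ * m⁻¹)
                = (ENNReal.ofReal c)⁻¹ * (m * m⁻¹) := by ring
              _ ≤ (ENNReal.ofReal c)⁻¹ * 1 := mul_le_mul_right (ENNReal.mul_inv_le_one m) _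
              _ = _ := mul_one _
    -- pointwise covering bound
    have hpoint : ∀ x : Euc d,
        ρ x * (den x)⁻¹ * ENNReal.ofReal (φ (x - y))
          ≤ ENNReal.ofReal M * ∑ z ∈ t,
              (Metric.ball (y + z) (r₁ / 2)).indicator (fun x' => ρ x' * (den x')⁻¹) x := by
      intro x
      by_cases hxy : ‖x - y‖ ≤ r₂
      · obtain ⟨z, hzt, hz⟩ := Set.mem_iUnion₂.1
          (ht (show x - y ∈ Metric.closedBall 0 r₂ by
            simpa [Metric.mem_closedBall, dist_eq_norm] using hxy))
        have hxS : x ∈ Metric.ball (y + z) (r₁ / 2) := by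
          rw [Metric.mem_ball, dist_eq_norm, sub_add_eq_sub_sub]
          simpa [Metric.mem_ball, dist_eq_norm] using hz
        calc ρ x * (den x)⁻¹ * ENNReal.ofReal (φ (x - y))
            ≤ ρ x * (den x)⁻¹ * ENNReal.ofReal M :=
              mul_le_mul_right (ENNReal.ofReal_le_ofReal (hM _)) _
          _ = ENNReal.ofReal M * (ρ x * (den x)⁻¹) := mul_comm _ _
          _ ≤ _ := by
              refine mul_le_mul_right ?_ _
              have hle : (Metric.ball (y + z) (r₁ / 2)).indicator
                  (fun x' => ρ x' * (den x')⁻¹) x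
                  ≤ ∑ z' ∈ t, (Metric.ball (y + z') (r₁ / 2)).indicator
                      (fun x' => ρ x' * (den x')⁻¹) x :=
                Finset.single_le_sum (f := fun z' => (Metric.ball (y + z') (r₁ / 2)).indicator
                  (fun x' => ρ x' * (den x')⁻¹) x) (fun _ _ => zero_le) hzt
              rwa [Set.indicator_of_mem hxS] at hle
      · rw [hφsupp _ (not_le.1 hxy)]
        simp
    calc (∫⁻ x, ρ x * (den x)⁻¹ * ENNReal.ofReal (φ (x - y)))
        ≤ ∫⁻ x, ENNReal.ofReal M * ∑ z ∈ t,
            (Metric.ball (y + z) (r₁ / 2)).indicator (fun x' => ρ x' * (den x')⁻¹) x :=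
          lintegral_mono hpoint
      _ = ENNReal.ofReal M * ∑ z ∈ t, ∫⁻ x,
            (Metric.ball (y + z) (r₁ / 2)).indicator (fun x' => ρ x' * (den x')⁻¹) x := by
          rw [lintegral_const_mul'' _ (Finset.aemeasurable_fun_sum t
            (fun z _ => (hqmeas.indicator (hSmeas z)).aemeasurable)),
            lintegral_finset_sum _ (fun z _ => hqmeas.indicator (hSmeas z))]
      _ ≤ ENNReal.ofReal M * ∑ _z ∈ t, (ENNReal.ofReal c)⁻¹ :=
          mul_le_mul_right (Finset.sum_le_sum fun z _ => hball z) _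
      _ = ENNReal.ofReal M * ((t.card : ℝ≥0∞) * (ENNReal.ofReal c)⁻¹) := by
          rw [Finset.sum_const, nsmul_eq_mul]
      _ = ENNReal.ofReal (M * t.card / c) := by
          rw [div_eq_mul_inv, ENNReal.ofReal_mul (by positivity), ENNReal.ofReal_mul hM0,
            ENNReal.ofReal_natCast, ENNReal.ofReal_inv_of_pos hc0, mul_assoc]
  -- assembly
  have hRHS : (∫⁻ z : Euc d × Euc d, ENNReal.ofReal (‖z.2‖ ^ p * f z)) = ∫⁻ z, F z :=
    lintegral_congr hFrhs
  rw [hRHS]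
  have hmeasq : Measurable fun x => ρ x * (den x)⁻¹ := hρmeas.mul hdenmeas.inv
  calc (∫⁻ z : Euc d × Euc d, ENNReal.ofReal (‖uReg d R φ θR f z.1‖ ^ p * f z))
      ≤ ∫⁻ z : Euc d × Euc d, (Bp z.1 / den z.1) * ENNReal.ofReal (f z) := by
        refine lintegral_mono fun z => ?_
        rw [ENNReal.ofReal_mul (Real.rpow_nonneg (norm_nonneg _) p)]
        exact mul_le_mul_left (hpt z.1) _
    _ = ∫⁻ x, (Bp x / den x) * ρ x := by
        have hm : Measurable fun z : Euc d × Euc d =>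
            (Bp z.1 / den z.1) * ENNReal.ofReal (f z) :=
          ((hBmeas.comp measurable_fst).div (hdenmeas.comp measurable_fst)).mul hofReal_f
        rw [Measure.volume_eq_prod, lintegral_prod _ hm.aemeasurable]
        refine lintegral_congr fun x => ?_
        show (∫⁻ v, (Bp x / den x) * ENNReal.ofReal (f (x, v))) = _
        exact lintegral_const_mul'' _ ((hofReal_f.comp measurable_prodMk_left).aemeasurable)
    _ = ∫⁻ x, ∫⁻ ζ : Euc d × Euc d,
          (ρ x * (den x)⁻¹ * ENNReal.ofReal (φ (x - ζ.1))) * F ζ := by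
        refine lintegral_congr fun x => ?_
        have hmBx : Measurable fun ζ : Euc d × Euc d =>
            (ENNReal.ofReal (φ (x - ζ.1)) * ENNReal.ofReal (f ζ)) * ENNReal.ofReal ‖ζ.2‖ ^ p :=
          ((ENNReal.measurable_ofReal.comp
            (hφmeas.comp (measurable_const.sub measurable_fst))).mul hofReal_f).mul
            (hWmeas.pow_const p)
        have h1 : Bp x / den x * ρ x = (ρ x * (den x)⁻¹) * Bp x := by
          rw [div_eq_mul_inv]; ring
        rw [h1, show Bp x = ∫⁻ ζ : Euc d × Euc d,
            (ENNReal.ofReal (φ (x - ζ.1)) * ENNReal.ofReal (f ζ)) * ENNReal.ofReal ‖ζ.2‖ ^ p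
            from rfl,
          ← lintegral_const_mul'' (ρ x * (den x)⁻¹) hmBx.aemeasurable]
        refine lintegral_congr fun ζ => ?_
        simp only [hFdef]
        ring
    _ = ∫⁻ ζ : Euc d × Euc d, ∫⁻ x,
          (ρ x * (den x)⁻¹ * ENNReal.ofReal (φ (x - ζ.1))) * F ζ := by
        have hswap : Measurable fun w : Euc d × (Euc d × Euc d) =>
            (ρ w.1 * (den w.1)⁻¹ * ENNReal.ofReal (φ (w.1 - w.2.1))) * F w.2 :=
          (((hρmeas.comp measurable_fst).mul ((hdenmeas.comp measurable_fst).inv)).mul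
            (ENNReal.measurable_ofReal.comp
              (hφmeas.comp (measurable_fst.sub measurable_snd.fst)))).mul
            (hFmeas.comp measurable_snd)
        exact lintegral_lintegral_swap hswap.aemeasurable
    _ = ∫⁻ ζ : Euc d × Euc d,
          (∫⁻ x, ρ x * (den x)⁻¹ * ENNReal.ofReal (φ (x - ζ.1))) * F ζ := by
        refine lintegral_congr fun ζ => lintegral_mul_const'' _ ?_
        exact (hmeasq.mul (ENNReal.measurable_ofReal.comp
          (hφmeas.comp (measurable_id.sub measurable_const)))).aemeasurable
    _ ≤ ∫⁻ ζ : Euc d × Euc d, ENNReal.ofReal (M * t.card / c) * F ζ :=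
        lintegral_mono fun ζ => mul_le_mul_left (hK ζ.1) _
    _ = ENNReal.ofReal (M * t.card / c) * ∫⁻ ζ : Euc d × Euc d, F ζ :=
        lintegral_const_mul'' _ hFmeas.aemeasurable
end

section
/- Let d ≥ 1, let G : ℝ^d → ℝ be bounded by M and Lipschitz with constant L, and let θ : ℝ^d → ℝ^d be bounded by M and Lipschitz with constant L. Then there exists C depending only on M and L such that for all z = (x,v), z' = (x',v') in ℝ^d × ℝ^d, all probability measures μ, ν on ℝ^d × ℝ^d, and every coupling π of μ and ν (i.e. a probability measure on (ℝ^{2d})² whose first marginal is μ and second marginal is ν), one has | ∫ G(x−y) θ(w−v) dμ(y,w) − ∫ G(x'−y) θ(w−v') dν(y,w) | ≤ C ( |z−z'| + ∫ |ζ₁ − ζ₂| dπ(ζ₁,ζ₂) ). -/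
open MeasureTheory
open scoped ENNReal NNReal

/-- global Lipschitz estimate for the regularized Cucker–Smale coefficient:
for `G` bounded Lipschitz (scalar) and `θ` bounded Lipschitz (vector), there is
`C = C(M, L)` such that for all `z = (x,v)`, `z' = (x',v')`, all probability measures
`μ, ν` and every coupling `π` of `μ` and `ν`,
`| ∫ G(x−y) θ(w−v) dμ − ∫ G(x'−y) θ(w−v') dν | ≤ C (|z−z'| + ∫ |ζ₁−ζ₂| dπ)`. -/
theorem stmt4 (d : ℕ) (hd : 1 ≤ d) (M : ℝ) (L : ℝ≥0) :
    ∃ C : ℝ, 0 < C ∧ ∀ G : Euc d → ℝ, (∀ x, |G x| ≤ M) → LipschitzWith L G →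
      ∀ θ : Euc d → Euc d, (∀ x, ‖θ x‖ ≤ M) → LipschitzWith L θ →
      ∀ x v x' v' : Euc d,
      ∀ μ ν : Measure (Euc d × Euc d), IsProbabilityMeasure μ → IsProbabilityMeasure ν →
      ∀ π : Measure ((Euc d × Euc d) × (Euc d × Euc d)), IsProbabilityMeasure π →
        π.map Prod.fst = μ → π.map Prod.snd = ν →
        ENNReal.ofReal
            ‖(∫ ζ : Euc d × Euc d, G (x - ζ.1) • θ (ζ.2 - v) ∂μ) -
              ∫ ζ : Euc d × Euc d, G (x' - ζ.1) • θ (ζ.2 - v') ∂ν‖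
          ≤ ENNReal.ofReal C *
            (ENNReal.ofReal ‖((x, v) : Euc d × Euc d) - ((x', v') : Euc d × Euc d)‖ +
              ∫⁻ ζ : (Euc d × Euc d) × (Euc d × Euc d),
                ENNReal.ofReal ‖ζ.1 - ζ.2‖ ∂π) := by
  refine ⟨2 * |M| * L + 1, by positivity, ?_⟩
  intro G hGb hGl θ hθb hθl x v x' v' μ ν hμ hν π hπ hfst hsnd
  set C : ℝ := 2 * |M| * L + 1 with hC
  have hM0 : 0 ≤ M := le_trans (abs_nonneg _) (hGb 0)
  have hMabs : |M| = M := abs_of_nonneg hM0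
  -- the distance function
  haveI : BorelSpace ((Euc d × Euc d) × (Euc d × Euc d)) := Prod.borelSpace
  set ρ : ((Euc d × Euc d) × (Euc d × Euc d)) → ℝ := fun ζ => ‖ζ.1 - ζ.2‖ with hρ
  have hρmeas : Measurable ρ := (continuous_fst.sub continuous_snd).norm.measurable
  have hρ0 : ∀ ζ, 0 ≤ ρ ζ := fun ζ => norm_nonneg _
  set D : ℝ := ‖((x, v) : Euc d × Euc d) - ((x', v') : Euc d × Euc d)‖ with hD
  have hD0 : 0 ≤ D := norm_nonneg _
  by_cases htop : (∫⁻ ζ, ENNReal.ofReal (ρ ζ) ∂π) = ⊤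
  · rw [htop, add_top, ENNReal.mul_top]
    · exact le_top
    · simp only [ne_eq, ENNReal.ofReal_eq_zero, not_le]
      positivity
  -- now the lintegral is finite; ρ is integrable
  have hρint : Integrable ρ π := by
    refine ⟨hρmeas.aestronglyMeasurable, ?_⟩
    rw [hasFiniteIntegral_iff_norm]
    simpa [abs_of_nonneg (hρ0 _)] using lt_top_iff_ne_top.2 htop
  set r : ℝ := ∫ ζ, ρ ζ ∂π with hr
  have hr0 : 0 ≤ r := integral_nonneg hρ0
  have hlint : (∫⁻ ζ, ENNReal.ofReal (ρ ζ) ∂π) = ENNReal.ofReal r := by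
    rw [hr, ofReal_integral_eq_lintegral_ofReal hρint (.of_forall hρ0)]
  rw [hlint, ← ENNReal.ofReal_add hD0 hr0, ← ENNReal.ofReal_mul (by positivity)]
  refine ENNReal.ofReal_le_ofReal ?_
  -- the integrand functions over the coupling
  set F₁ : ((Euc d × Euc d) × (Euc d × Euc d)) → Euc d :=
    fun ζ => G (x - ζ.1.1) • θ (ζ.1.2 - v) with hF₁
  set F₂ : ((Euc d × Euc d) × (Euc d × Euc d)) → Euc d :=
    fun ζ => G (x' - ζ.2.1) • θ (ζ.2.2 - v') with hF₂
  have hGc : Continuous G := hGl.continuous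
  have hθc : Continuous θ := hθl.continuous
  have hF₁c : Continuous F₁ := by
    exact (hGc.comp (continuous_const.sub (continuous_fst.fst))).smul
      (hθc.comp ((continuous_fst.snd).sub continuous_const))
  have hF₂c : Continuous F₂ := by
    exact (hGc.comp (continuous_const.sub (continuous_snd.fst))).smul
      (hθc.comp ((continuous_snd.snd).sub continuous_const))
  have hbd : ∀ (F : ((Euc d × Euc d) × (Euc d × Euc d)) → Euc d), Continuous F →
      (∀ ζ, ‖F ζ‖ ≤ M * M) → Integrable F π := by
    intro F hc hb
    exact (integrable_const (M * M)).mono' hc.aestronglyMeasurable (.of_forall hb)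
  have hnF : ∀ (a : Euc d) (g : ℝ), |g| ≤ M → ‖θ a‖ ≤ M → ‖g • θ a‖ ≤ M * M := by
    intro a g hg hθa
    rw [norm_smul]
    exact mul_le_mul hg hθa (norm_nonneg _) hM0
  have hF₁i : Integrable F₁ π := hbd _ hF₁c fun ζ => hnF _ _ (hGb _) (hθb _)
  have hF₂i : Integrable F₂ π := hbd _ hF₂c fun ζ => hnF _ _ (hGb _) (hθb _)
  -- rewrite the two integrals over marginals as integrals over π
  have e₁ : (∫ ζ : Euc d × Euc d, G (x - ζ.1) • θ (ζ.2 - v) ∂μ) = ∫ ζ, F₁ ζ ∂π := by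
    rw [← hfst, integral_map measurable_fst.aemeasurable]
    exact ((hGc.comp (continuous_const.sub continuous_fst)).smul
      (hθc.comp (continuous_snd.sub continuous_const))).aestronglyMeasurable
  have e₂ : (∫ ζ : Euc d × Euc d, G (x' - ζ.1) • θ (ζ.2 - v') ∂ν) = ∫ ζ, F₂ ζ ∂π := by
    rw [← hsnd, integral_map measurable_snd.aemeasurable]
    exact ((hGc.comp (continuous_const.sub continuous_fst)).smul
      (hθc.comp (continuous_snd.sub continuous_const))).aestronglyMeasurable
  rw [e₁, e₂, ← integral_sub hF₁i hF₂i]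
  -- pointwise bound
  have hpt : ∀ ζ, ‖F₁ ζ - F₂ ζ‖ ≤ C * (D + ρ ζ) := by
    intro ζ
    obtain ⟨⟨y, w⟩, ⟨y', w'⟩⟩ := ζ
    have key : F₁ ((y, w), (y', w')) - F₂ ((y, w), (y', w'))
        = G (x - y) • (θ (w - v) - θ (w' - v'))
          + (G (x - y) - G (x' - y')) • θ (w' - v') := by
      simp only [hF₁, hF₂]
      module
    have h1 : ‖θ (w - v) - θ (w' - v')‖ ≤ L * (‖w - w'‖ + ‖v - v'‖) := by
      have := hθl.dist_le_mul (w - v) (w' - v')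
      rw [dist_eq_norm, dist_eq_norm] at this
      refine this.trans ?_
      have : ‖w - v - (w' - v')‖ ≤ ‖w - w'‖ + ‖v - v'‖ := by
        have : w - v - (w' - v') = (w - w') - (v - v') := by module
        rw [this]
        exact norm_sub_le _ _
      exact mul_le_mul_of_nonneg_left this L.coe_nonneg
    have h2 : |G (x - y) - G (x' - y')| ≤ L * (‖x - x'‖ + ‖y - y'‖) := by
      have := hGl.dist_le_mul (x - y) (x' - y')
      rw [Real.dist_eq, dist_eq_norm] at this
      refine this.trans ?_
      have : ‖x - y - (x' - y')‖ ≤ ‖x - x'‖ + ‖y - y'‖ := by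
        have : x - y - (x' - y') = (x - x') - (y - y') := by module
        rw [this]
        exact norm_sub_le _ _
      exact mul_le_mul_of_nonneg_left this L.coe_nonneg
    have hxx' : ‖x - x'‖ ≤ D := norm_fst_le (((x, v) : Euc d × Euc d) - (x', v'))
    have hvv' : ‖v - v'‖ ≤ D := norm_snd_le (((x, v) : Euc d × Euc d) - (x', v'))
    have hyy' : ‖y - y'‖ ≤ ρ ((y, w), (y', w')) :=
      norm_fst_le (((y, w) : Euc d × Euc d) - (y', w'))
    have hww' : ‖w - w'‖ ≤ ρ ((y, w), (y', w')) :=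
      norm_snd_le (((y, w) : Euc d × Euc d) - (y', w'))
    set ρζ := ρ ((y, w), (y', w'))
    have hρζ0 : 0 ≤ ρζ := hρ0 _
    calc ‖F₁ ((y, w), (y', w')) - F₂ ((y, w), (y', w'))‖
        ≤ ‖G (x - y) • (θ (w - v) - θ (w' - v'))‖
          + ‖(G (x - y) - G (x' - y')) • θ (w' - v')‖ := by
          rw [key]; exact norm_add_le _ _
      _ = |G (x - y)| * ‖θ (w - v) - θ (w' - v')‖
          + |G (x - y) - G (x' - y')| * ‖θ (w' - v')‖ := by
          rw [norm_smul, norm_smul, Real.norm_eq_abs, Real.norm_eq_abs]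
      _ ≤ M * (L * (‖w - w'‖ + ‖v - v'‖)) + (L * (‖x - x'‖ + ‖y - y'‖)) * M :=
          add_le_add (mul_le_mul (hGb _) h1 (norm_nonneg _) hM0)
            (mul_le_mul h2 (hθb _) (norm_nonneg _) (by positivity))
      _ ≤ M * (L * (ρζ + D)) + (L * (D + ρζ)) * M := by
          gcongr <;> assumption
      _ = 2 * M * L * (D + ρζ) := by ring
      _ ≤ C * (D + ρζ) := by
          rw [hC, hMabs]
          have : (2 * M * L : ℝ) ≤ 2 * M * L + 1 := by linarith
          exact mul_le_mul_of_nonneg_right this (by positivity)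
  calc ‖∫ ζ, (F₁ ζ - F₂ ζ) ∂π‖ ≤ ∫ ζ, ‖F₁ ζ - F₂ ζ‖ ∂π := norm_integral_le_integral_norm _
    _ ≤ ∫ ζ, C * (D + ρ ζ) ∂π := by
        refine integral_mono_of_nonneg (.of_forall fun ζ => norm_nonneg _) ?_ (.of_forall hpt)
        exact ((integrable_const D).add hρint).const_mul C
    _ = C * (D + r) := by
        simp_rw [← smul_eq_mul, integral_smul]
        rw [integral_add (integrable_const D) hρint, integral_const]
        simp [hr, smul_eq_mul]
end

section
/- Let d ≥ 1 and R > 0. Let φ : ℝ^d → [0,∞) be bounded by M_φ and Lipschitz with constant L_φ, and let θ_R : ℝ^d → ℝ^d be bounded by M_θ and Lipschitz with constant L_θ. For a probability measure μ on ℝ^d × ℝ^d define u_R[μ](x) = (∫ φ(x−y) θ_R(w) dμ(y,w)) / (R^{−1} + ∫ φ(x−y) dμ(y,w)). Then there exists C depending only on R, M_φ, L_φ, M_θ, L_θ such that for all x, x' ∈ ℝ^d, all probability measures μ, ν on ℝ^d × ℝ^d, and every coupling π of μ and ν, one has | u_R[μ](x) − u_R[ν](x') | ≤ C ( |x−x'|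 + ∫ |ζ₁ − ζ₂| dπ(ζ₁,ζ₂) ). -/
open MeasureTheory
open scoped ENNReal NNReal

/-- The regularized Motsch–Tadmor local average velocity of a probability measure `μ`:
`u_R[μ](x) = (∫ φ(x−y) θ_R(w) dμ(y,w)) / (R⁻¹ + ∫ φ(x−y) dμ(y,w))`. -/
noncomputable def uRegMeas (d : ℕ) (R : ℝ) (φ : Euc d → ℝ) (θR : Euc d → Euc d)
    (μ : Measure (Euc d × Euc d)) (x : Euc d) : Euc d :=
  (R⁻¹ + ∫ ζ : Euc d × Euc d, φ (x - ζ.1) ∂μ)⁻¹ •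
    ∫ ζ : Euc d × Euc d, φ (x - ζ.1) • θR ζ.2 ∂μ

set_option maxHeartbeats 1000000

/-- global Lipschitz estimate for the regularized Motsch–Tadmor local
average velocity: there is `C = C(R, M_φ, L_φ, M_θ, L_θ)` such that for all `x, x'`, all
probability measures `μ, ν` and every coupling `π` of `μ` and `ν`,
`|u_R[μ](x) − u_R[ν](x')| ≤ C (|x−x'| + ∫ |ζ₁−ζ₂| dπ)`. -/
theorem stmt5 (d : ℕ) (hd : 1 ≤ d) (R : ℝ) (hR : 0 < R) (Mφ Mθ : ℝ) (Lφ Lθ : ℝ≥0) :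
    ∃ C : ℝ, 0 < C ∧
      ∀ φ : Euc d → ℝ, (∀ x, 0 ≤ φ x) → (∀ x, φ x ≤ Mφ) → LipschitzWith Lφ φ →
      ∀ θR : Euc d → Euc d, (∀ w, ‖θR w‖ ≤ Mθ) → LipschitzWith Lθ θR →
      ∀ x x' : Euc d,
      ∀ μ ν : Measure (Euc d × Euc d), IsProbabilityMeasure μ → IsProbabilityMeasure ν →
      ∀ π : Measure ((Euc d × Euc d) × (Euc d × Euc d)), IsProbabilityMeasure π →
        π.map Prod.fst = μ → π.map Prod.snd = ν →
        ENNReal.ofReal ‖uRegMeas d R φ θR μ x - uRegMeas d R φ θR ν x'‖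
          ≤ ENNReal.ofReal C *
            (ENNReal.ofReal ‖x - x'‖ +
              ∫⁻ ζ : (Euc d × Euc d) × (Euc d × Euc d),
                ENNReal.ofReal ‖ζ.1 - ζ.2‖ ∂π) := by
  classical
  refine ⟨R * ((Lφ : ℝ) * |Mθ| + |Mφ| * (Lθ : ℝ)) + R ^ 2 * |Mφ| * |Mθ| * (Lφ : ℝ) + 1,
    by positivity, ?_⟩
  intro φ hφ0 hφM hφL θR hθM hθL x x' μ ν hμ hν π hπ hπ1 hπ2
  have hMφ0 : 0 ≤ Mφ := le_trans (hφ0 0) (hφM 0)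
  have hMθ0 : 0 ≤ Mθ := le_trans (norm_nonneg _) (hθM 0)
  rw [abs_of_nonneg hMφ0, abs_of_nonneg hMθ0]
  set C : ℝ := R * ((Lφ : ℝ) * Mθ + Mφ * (Lθ : ℝ)) + R ^ 2 * Mφ * Mθ * (Lφ : ℝ) + 1 with hCdef
  have hC0 : 0 < C := by positivity
  by_cases htop : (∫⁻ ζ : (Euc d × Euc d) × (Euc d × Euc d),
      ENNReal.ofReal ‖ζ.1 - ζ.2‖ ∂π) = ⊤
  · rw [htop]
    have h1 : ENNReal.ofReal ‖x - x'‖ + (⊤ : ℝ≥0∞) = ⊤ := by simp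
    rw [h1, ENNReal.mul_top (by simpa using (ENNReal.ofReal_pos.mpr hC0).ne')]
    exact le_top
  -- measurability / continuity basics
  have hφc : Continuous φ := hφL.continuous
  have hθc : Continuous θR := hθL.continuous
  have hOM1 : OpensMeasurableSpace (Euc d × Euc d) := by infer_instance
  have hOM2 : OpensMeasurableSpace ((Euc d × Euc d) × (Euc d × Euc d)) := by infer_instance
  have hgc : Continuous (fun ζ : (Euc d × Euc d) × (Euc d × Euc d) => ‖ζ.1 - ζ.2‖) :=
    (continuous_fst.sub continuous_snd).norm
  have hg_int : Integrable (fun ζ : (Euc d × Euc d) × (Euc d × Euc d) => ‖ζ.1 - ζ.2‖) π := by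
    refine ⟨hgc.aestronglyMeasurable, ?_⟩
    rw [hasFiniteIntegral_iff_ofReal (Filter.Eventually.of_forall fun ζ => norm_nonneg _)]
    exact lt_top_iff_ne_top.mpr htop
  set Iℝ : ℝ := ∫ ζ : (Euc d × Euc d) × (Euc d × Euc d), ‖ζ.1 - ζ.2‖ ∂π with hIdef
  have hIof : ENNReal.ofReal Iℝ = ∫⁻ ζ : (Euc d × Euc d) × (Euc d × Euc d),
      ENNReal.ofReal ‖ζ.1 - ζ.2‖ ∂π :=
    ofReal_integral_eq_lintegral_ofReal hg_int
      (Filter.Eventually.of_forall fun ζ => norm_nonneg _)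
  rw [← hIof]
  set D : ℝ := ‖x - x'‖ with hDdef
  have hD0 : 0 ≤ D := norm_nonneg _
  have hI0 : 0 ≤ Iℝ := integral_nonneg fun ζ => norm_nonneg _
  rw [← ENNReal.ofReal_add hD0 hI0, ← ENNReal.ofReal_mul hC0.le]
  apply ENNReal.ofReal_le_ofReal
  -- now a real inequality
  -- integrands over π
  have hc1 : ∀ z : Euc d, Continuous (fun ζ : (Euc d × Euc d) × (Euc d × Euc d) =>
      φ (z - ζ.1.1)) := fun z =>
    hφc.comp (continuous_const.sub (continuous_fst.fst))
  have hc2 : ∀ z : Euc d, Continuous (fun ζ : (Euc d × Euc d) × (Euc d × Euc d) =>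
      φ (z - ζ.2.1)) := fun z =>
    hφc.comp (continuous_const.sub (continuous_snd.fst))
  have hint1 : ∀ z : Euc d, Integrable (fun ζ : (Euc d × Euc d) × (Euc d × Euc d) =>
      φ (z - ζ.1.1)) π := by
    intro z
    refine (integrable_const Mφ).mono' ((hc1 z).aestronglyMeasurable) ?_
    filter_upwards with ζ
    rw [Real.norm_eq_abs, abs_of_nonneg (hφ0 _)]
    exact hφM _
  have hint2 : ∀ z : Euc d, Integrable (fun ζ : (Euc d × Euc d) × (Euc d × Euc d) =>
      φ (z - ζ.2.1)) π := by
    intro z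
    refine (integrable_const Mφ).mono' ((hc2 z).aestronglyMeasurable) ?_
    filter_upwards with ζ
    rw [Real.norm_eq_abs, abs_of_nonneg (hφ0 _)]
    exact hφM _
  have hintB1 : Integrable (fun ζ : (Euc d × Euc d) × (Euc d × Euc d) =>
      φ (x - ζ.1.1) • θR ζ.1.2) π := by
    refine (integrable_const (Mφ * Mθ)).mono'
      (((hc1 x).smul (hθc.comp continuous_fst.snd)).aestronglyMeasurable) ?_
    filter_upwards with ζ
    rw [norm_smul, Real.norm_eq_abs, abs_of_nonneg (hφ0 _)]
    exact mul_le_mul (hφM _) (hθM _) (norm_nonneg _) hMφ0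
  have hintB2 : Integrable (fun ζ : (Euc d × Euc d) × (Euc d × Euc d) =>
      φ (x' - ζ.2.1) • θR ζ.2.2) π := by
    refine (integrable_const (Mφ * Mθ)).mono'
      (((hc2 x').smul (hθc.comp continuous_snd.snd)).aestronglyMeasurable) ?_
    filter_upwards with ζ
    rw [norm_smul, Real.norm_eq_abs, abs_of_nonneg (hφ0 _)]
    exact mul_le_mul (hφM _) (hθM _) (norm_nonneg _) hMφ0
  -- rewrite the μ, ν integrals as π integrals
  have hAμ : (∫ ζ : Euc d × Euc d, φ (x - ζ.1) ∂μ)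
      = ∫ ζ : (Euc d × Euc d) × (Euc d × Euc d), φ (x - ζ.1.1) ∂π := by
    have hc : Continuous (fun ζ : Euc d × Euc d => φ (x - ζ.1)) :=
      hφc.comp (continuous_const.sub continuous_fst)
    rw [← hπ1, integral_map measurable_fst.aemeasurable hc.aestronglyMeasurable]
  have hAν : (∫ ζ : Euc d × Euc d, φ (x' - ζ.1) ∂ν)
      = ∫ ζ : (Euc d × Euc d) × (Euc d × Euc d), φ (x' - ζ.2.1) ∂π := by
    have hc : Continuous (fun ζ : Euc d × Euc d => φ (x' - ζ.1)) :=
      hφc.comp (continuous_const.sub continuous_fst)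
    rw [← hπ2, integral_map measurable_snd.aemeasurable hc.aestronglyMeasurable]
  have hBμ : (∫ ζ : Euc d × Euc d, φ (x - ζ.1) • θR ζ.2 ∂μ)
      = ∫ ζ : (Euc d × Euc d) × (Euc d × Euc d), φ (x - ζ.1.1) • θR ζ.1.2 ∂π := by
    have hc : Continuous (fun ζ : Euc d × Euc d => φ (x - ζ.1) • θR ζ.2) :=
      (hφc.comp (continuous_const.sub continuous_fst)).smul (hθc.comp continuous_snd)
    rw [← hπ1, integral_map measurable_fst.aemeasurable hc.aestronglyMeasurable]
  have hBν : (∫ ζ : Euc d × Euc d, φ (x' - ζ.1) • θR ζ.2 ∂ν)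
      = ∫ ζ : (Euc d × Euc d) × (Euc d × Euc d), φ (x' - ζ.2.1) • θR ζ.2.2 ∂π := by
    have hc : Continuous (fun ζ : Euc d × Euc d => φ (x' - ζ.1) • θR ζ.2) :=
      (hφc.comp (continuous_const.sub continuous_fst)).smul (hθc.comp continuous_snd)
    rw [← hπ2, integral_map measurable_snd.aemeasurable hc.aestronglyMeasurable]
  -- abbreviations
  set Aμ : ℝ := ∫ ζ : Euc d × Euc d, φ (x - ζ.1) ∂μ with hAμdef
  set Aν : ℝ := ∫ ζ : Euc d × Euc d, φ (x' - ζ.1) ∂ν with hAνdef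
  set Bμ : Euc d := ∫ ζ : Euc d × Euc d, φ (x - ζ.1) • θR ζ.2 ∂μ with hBμdef
  set Bν : Euc d := ∫ ζ : Euc d × Euc d, φ (x' - ζ.1) • θR ζ.2 ∂ν with hBνdef
  have hAμ0 : 0 ≤ Aμ := by
    rw [hAμdef]; exact integral_nonneg fun ζ => hφ0 _
  have hAν0 : 0 ≤ Aν := by
    rw [hAνdef]; exact integral_nonneg fun ζ => hφ0 _
  set aμ : ℝ := R⁻¹ + Aμ with haμdef
  set aν : ℝ := R⁻¹ + Aν with haνdef
  have haμpos : 0 < aμ := by positivity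
  have haνpos : 0 < aν := by positivity
  have haμR : aμ⁻¹ ≤ R := by
    rw [← inv_inv R]
    exact inv_anti₀ (by positivity) (le_add_of_nonneg_right hAμ0)
  have haνR : aν⁻¹ ≤ R := by
    rw [← inv_inv R]
    exact inv_anti₀ (by positivity) (le_add_of_nonneg_right hAν0)
  -- pointwise bounds
  have hgfst : ∀ ζ : (Euc d × Euc d) × (Euc d × Euc d), ‖ζ.1.1 - ζ.2.1‖ ≤ ‖ζ.1 - ζ.2‖ := by
    intro ζ
    have := norm_fst_le (ζ.1 - ζ.2)
    simpa using this
  have hgsnd : ∀ ζ : (Euc d × Euc d) × (Euc d × Euc d), ‖ζ.1.2 - ζ.2.2‖ ≤ ‖ζ.1 - ζ.2‖ := by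
    intro ζ
    have := norm_snd_le (ζ.1 - ζ.2)
    simpa using this
  have hpw : ∀ ζ : (Euc d × Euc d) × (Euc d × Euc d),
      |φ (x - ζ.1.1) - φ (x' - ζ.2.1)| ≤ (Lφ : ℝ) * (D + ‖ζ.1 - ζ.2‖) := by
    intro ζ
    have h1 : |φ (x - ζ.1.1) - φ (x' - ζ.2.1)| ≤ (Lφ : ℝ) * ‖(x - ζ.1.1) - (x' - ζ.2.1)‖ := by
      have := hφL.dist_le_mul (x - ζ.1.1) (x' - ζ.2.1)
      simpa [Real.dist_eq, dist_eq_norm] using this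
    refine h1.trans ?_
    have h2 : ‖(x - ζ.1.1) - (x' - ζ.2.1)‖ ≤ D + ‖ζ.1 - ζ.2‖ := by
      have h3 : (x - ζ.1.1) - (x' - ζ.2.1) = (x - x') - (ζ.1.1 - ζ.2.1) := by abel
      rw [h3]
      exact (norm_sub_le _ _).trans (by exact add_le_add le_rfl (hgfst ζ))
    exact mul_le_mul_of_nonneg_left h2 (Lφ.coe_nonneg)
  -- bound on |Aμ - Aν|
  have hintbound : Integrable (fun ζ : (Euc d × Euc d) × (Euc d × Euc d) =>
      (Lφ : ℝ) * (D + ‖ζ.1 - ζ.2‖)) π :=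
    (((integrable_const D).add hg_int).const_mul _)
  have hbg : ∀ c : ℝ, (∫ ζ : (Euc d × Euc d) × (Euc d × Euc d),
      c * (D + ‖ζ.1 - ζ.2‖) ∂π) = c * (D + Iℝ) := by
    intro c
    have h2 : (∫ ζ : (Euc d × Euc d) × (Euc d × Euc d), (D + ‖ζ.1 - ζ.2‖) ∂π)
        = (∫ _ζ : (Euc d × Euc d) × (Euc d × Euc d), D ∂π)
          + ∫ ζ : (Euc d × Euc d) × (Euc d × Euc d), ‖ζ.1 - ζ.2‖ ∂π :=
      integral_add (integrable_const D) hg_int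
    rw [integral_const_mul, h2, integral_const]
    simp [hIdef]
  have hbound_int : (∫ ζ : (Euc d × Euc d) × (Euc d × Euc d),
      (Lφ : ℝ) * (D + ‖ζ.1 - ζ.2‖) ∂π) = (Lφ : ℝ) * (D + Iℝ) := hbg _
  have hA : |Aμ - Aν| ≤ (Lφ : ℝ) * (D + Iℝ) := by
    rw [hAμ, hAν, ← integral_sub (hint1 x) (hint2 x')]
    calc |∫ ζ : (Euc d × Euc d) × (Euc d × Euc d),
          (φ (x - ζ.1.1) - φ (x' - ζ.2.1)) ∂π|
        ≤ ∫ ζ : (Euc d × Euc d) × (Euc d × Euc d),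
          |φ (x - ζ.1.1) - φ (x' - ζ.2.1)| ∂π := by
          simpa [Real.norm_eq_abs] using
            norm_integral_le_integral_norm (μ := π)
              (fun ζ : (Euc d × Euc d) × (Euc d × Euc d) => φ (x - ζ.1.1) - φ (x' - ζ.2.1))
      _ ≤ ∫ ζ : (Euc d × Euc d) × (Euc d × Euc d),
          (Lφ : ℝ) * (D + ‖ζ.1 - ζ.2‖) ∂π := by
          refine integral_mono ((hint1 x).sub (hint2 x')).abs hintbound hpw
      _ = (Lφ : ℝ) * (D + Iℝ) := hbound_int
  -- bound on ‖Bμ - Bν‖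
  have hpwB : ∀ ζ : (Euc d × Euc d) × (Euc d × Euc d),
      ‖φ (x - ζ.1.1) • θR ζ.1.2 - φ (x' - ζ.2.1) • θR ζ.2.2‖
        ≤ (Lφ : ℝ) * Mθ * (D + ‖ζ.1 - ζ.2‖) + Mφ * (Lθ : ℝ) * ‖ζ.1 - ζ.2‖ := by
    intro ζ
    have hsplit : φ (x - ζ.1.1) • θR ζ.1.2 - φ (x' - ζ.2.1) • θR ζ.2.2
        = (φ (x - ζ.1.1) - φ (x' - ζ.2.1)) • θR ζ.1.2
          + φ (x' - ζ.2.1) • (θR ζ.1.2 - θR ζ.2.2) := by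
      rw [sub_smul, smul_sub]; abel
    rw [hsplit]
    refine (norm_add_le _ _).trans ?_
    rw [norm_smul, norm_smul, Real.norm_eq_abs, Real.norm_eq_abs, abs_of_nonneg (hφ0 _)]
    have hterm1 : |φ (x - ζ.1.1) - φ (x' - ζ.2.1)| * ‖θR ζ.1.2‖
        ≤ (Lφ : ℝ) * (D + ‖ζ.1 - ζ.2‖) * Mθ :=
      mul_le_mul (hpw ζ) (hθM _) (norm_nonneg _)
        (by positivity)
    have hθd : ‖θR ζ.1.2 - θR ζ.2.2‖ ≤ (Lθ : ℝ) * ‖ζ.1 - ζ.2‖ := by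
      have := hθL.dist_le_mul ζ.1.2 ζ.2.2
      rw [dist_eq_norm, dist_eq_norm] at this
      exact this.trans (mul_le_mul_of_nonneg_left (hgsnd ζ) Lθ.coe_nonneg)
    have hterm2 : φ (x' - ζ.2.1) * ‖θR ζ.1.2 - θR ζ.2.2‖
        ≤ Mφ * ((Lθ : ℝ) * ‖ζ.1 - ζ.2‖) :=
      mul_le_mul (hφM _) hθd (norm_nonneg _) hMφ0
    calc |φ (x - ζ.1.1) - φ (x' - ζ.2.1)| * ‖θR ζ.1.2‖
          + φ (x' - ζ.2.1) * ‖θR ζ.1.2 - θR ζ.2.2‖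
        ≤ (Lφ : ℝ) * (D + ‖ζ.1 - ζ.2‖) * Mθ + Mφ * ((Lθ : ℝ) * ‖ζ.1 - ζ.2‖) :=
          add_le_add hterm1 hterm2
      _ = (Lφ : ℝ) * Mθ * (D + ‖ζ.1 - ζ.2‖) + Mφ * (Lθ : ℝ) * ‖ζ.1 - ζ.2‖ := by ring
  have hintboundB : Integrable (fun ζ : (Euc d × Euc d) × (Euc d × Euc d) =>
      (Lφ : ℝ) * Mθ * (D + ‖ζ.1 - ζ.2‖) + Mφ * (Lθ : ℝ) * ‖ζ.1 - ζ.2‖) π :=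
    ((((integrable_const D).add hg_int).const_mul _).add (hg_int.const_mul _))
  have hB : ‖Bμ - Bν‖ ≤ (Lφ : ℝ) * Mθ * (D + Iℝ) + Mφ * (Lθ : ℝ) * Iℝ := by
    rw [hBμ, hBν, ← integral_sub hintB1 hintB2]
    calc ‖∫ ζ : (Euc d × Euc d) × (Euc d × Euc d),
          (φ (x - ζ.1.1) • θR ζ.1.2 - φ (x' - ζ.2.1) • θR ζ.2.2) ∂π‖
        ≤ ∫ ζ : (Euc d × Euc d) × (Euc d × Euc d),
          ‖φ (x - ζ.1.1) • θR ζ.1.2 - φ (x' - ζ.2.1) • θR ζ.2.2‖ ∂π :=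
          norm_integral_le_integral_norm _
      _ ≤ ∫ ζ : (Euc d × Euc d) × (Euc d × Euc d),
          ((Lφ : ℝ) * Mθ * (D + ‖ζ.1 - ζ.2‖) + Mφ * (Lθ : ℝ) * ‖ζ.1 - ζ.2‖) ∂π := by
          refine integral_mono (hintB1.sub hintB2).norm hintboundB hpwB
      _ = (Lφ : ℝ) * Mθ * (D + Iℝ) + Mφ * (Lθ : ℝ) * Iℝ := by
          have h1 : (∫ ζ : (Euc d × Euc d) × (Euc d × Euc d),
              ((Lφ : ℝ) * Mθ * (D + ‖ζ.1 - ζ.2‖) + Mφ * (Lθ : ℝ) * ‖ζ.1 - ζ.2‖) ∂π)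
              = (∫ ζ : (Euc d × Euc d) × (Euc d × Euc d),
                  (Lφ : ℝ) * Mθ * (D + ‖ζ.1 - ζ.2‖) ∂π)
                + ∫ ζ : (Euc d × Euc d) × (Euc d × Euc d), Mφ * (Lθ : ℝ) * ‖ζ.1 - ζ.2‖ ∂π :=
            integral_add (((integrable_const D).add hg_int).const_mul _)
              (hg_int.const_mul _)
          rw [h1, hbg, integral_const_mul, hIdef]
  -- bound on ‖Bν‖
  have hBνb : ‖Bν‖ ≤ Mφ * Mθ := by
    rw [hBν]
    calc ‖∫ ζ : (Euc d × Euc d) × (Euc d × Euc d), φ (x' - ζ.2.1) • θR ζ.2.2 ∂π‖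
        ≤ ∫ ζ : (Euc d × Euc d) × (Euc d × Euc d), ‖φ (x' - ζ.2.1) • θR ζ.2.2‖ ∂π :=
          norm_integral_le_integral_norm _
      _ ≤ ∫ _ζ : (Euc d × Euc d) × (Euc d × Euc d), Mφ * Mθ ∂π := by
          refine integral_mono hintB2.norm (integrable_const _) ?_
          intro ζ
          show ‖φ (x' - ζ.2.1) • θR ζ.2.2‖ ≤ Mφ * Mθ
          rw [norm_smul, Real.norm_eq_abs, abs_of_nonneg (hφ0 _)]
          exact mul_le_mul (hφM _) (hθM _) (norm_nonneg _) hMφ0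
      _ = Mφ * Mθ := by simp
  -- bound on |aμ⁻¹ - aν⁻¹|
  have hainv : |aμ⁻¹ - aν⁻¹| ≤ R ^ 2 * ((Lφ : ℝ) * (D + Iℝ)) := by
    have heq : aμ⁻¹ - aν⁻¹ = (aν - aμ) * (aμ⁻¹ * aν⁻¹) := by
      field_simp
    rw [heq, abs_mul, abs_mul, abs_of_nonneg (inv_nonneg.mpr haμpos.le),
      abs_of_nonneg (inv_nonneg.mpr haνpos.le)]
    have h1 : |aν - aμ| ≤ (Lφ : ℝ) * (D + Iℝ) := by
      rw [abs_sub_comm]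
      have : aμ - aν = Aμ - Aν := by rw [haμdef, haνdef]; ring
      rw [this]; exact hA
    calc |aν - aμ| * (aμ⁻¹ * aν⁻¹) ≤ ((Lφ : ℝ) * (D + Iℝ)) * (R * R) := by
          refine mul_le_mul h1 (mul_le_mul haμR haνR (inv_nonneg.mpr haνpos.le) hR.le)
            (by positivity) (by positivity)
      _ = R ^ 2 * ((Lφ : ℝ) * (D + Iℝ)) := by ring
  -- assemble
  have hkey : uRegMeas d R φ θR μ x - uRegMeas d R φ θR ν x'
      = aμ⁻¹ • (Bμ - Bν) + (aμ⁻¹ - aν⁻¹) • Bν := by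
    show aμ⁻¹ • Bμ - aν⁻¹ • Bν = aμ⁻¹ • (Bμ - Bν) + (aμ⁻¹ - aν⁻¹) • Bν
    module
  rw [hkey]
  calc ‖aμ⁻¹ • (Bμ - Bν) + (aμ⁻¹ - aν⁻¹) • Bν‖
      ≤ ‖aμ⁻¹ • (Bμ - Bν)‖ + ‖(aμ⁻¹ - aν⁻¹) • Bν‖ := norm_add_le _ _
    _ = |aμ⁻¹| * ‖Bμ - Bν‖ + |aμ⁻¹ - aν⁻¹| * ‖Bν‖ := by
        rw [norm_smul, norm_smul, Real.norm_eq_abs, Real.norm_eq_abs]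
    _ ≤ R * ((Lφ : ℝ) * Mθ * (D + Iℝ) + Mφ * (Lθ : ℝ) * Iℝ)
        + (R ^ 2 * ((Lφ : ℝ) * (D + Iℝ))) * (Mφ * Mθ) := by
        refine add_le_add ?_ ?_
        · refine mul_le_mul ?_ hB (norm_nonneg _) hR.le
          rw [abs_of_nonneg (inv_nonneg.mpr haμpos.le)]; exact haμR
        · exact mul_le_mul hainv hBνb (norm_nonneg _) (by positivity)
    _ ≤ C * (D + Iℝ) := by
        rw [hCdef]
        nlinarith [mul_nonneg (mul_nonneg (mul_nonneg hR.le hMφ0) Lθ.coe_nonneg) hD0,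
          add_nonneg hD0 hI0]
end

section
/- Let d ≥ 1 and let φ : ℝ^d → [0,∞) be measurable and bounded with compact support, such that inf_{|x| ≤ r₁} φ(x) > 0 for some r₁ > 0. Let ρ : ℝ^d → [0,∞) be locally integrable. Then ρ(x) = 0 for almost every x in the set { x ∈ ℝ^d : (φ*ρ)(x) = 0 }; equivalently, for every r > 0, ∫_{ { x ∈ B(0,r) : (φ*ρ)(x) = 0 } } ρ(x) dx = 0. -/
open MeasureTheory
open scoped ENNReal

/-- for `φ ≥ 0` bounded, compactly supported and bounded below near the
origin, and `ρ ≥ 0` locally integrable, `ρ` vanishes almost everywhere on the set where the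
convolution `φ * ρ` vanishes. -/
theorem stmt11 (d : ℕ) (hd : 1 ≤ d) (r₁ : ℝ) (hr₁ : 0 < r₁)
    (φ : Euc d → ℝ) (hφmeas : Measurable φ) (hφnonneg : ∀ x, 0 ≤ φ x)
    (hφbdd : ∃ M : ℝ, ∀ x, φ x ≤ M) (hφsupp : HasCompactSupport φ)
    (hφinf : ∃ c : ℝ, 0 < c ∧ ∀ x, ‖x‖ ≤ r₁ → c ≤ φ x)
    (ρ : Euc d → ℝ) (hρmeas : Measurable ρ) (hρnonneg : ∀ x, 0 ≤ ρ x)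
    (hρloc : LocallyIntegrable ρ volume) :
    ∀ᵐ x : Euc d, (∫ z, φ (x - z) * ρ z) = 0 → ρ x = 0 := by
  obtain ⟨M, hM⟩ := hφbdd
  obtain ⟨c, hc, hcφ⟩ := hφinf
  set A : Set (Euc d) := {x | (∫ z, φ (x - z) * ρ z) = 0} with hA
  set μ : Measure (Euc d) := volume.withDensity (fun z => ENNReal.ofReal (ρ z)) with hμ
  -- integrability of the slice
  have hint : ∀ x : Euc d, Integrable (fun z => φ (x - z) * ρ z) volume := by
    intro x
    have hK : IsCompact ((fun z : Euc d => x - z) '' tsupport φ) :=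
      (hφsupp.isCompact).image (by continuity)
    have hmeas : Measurable (fun z => φ (x - z) * ρ z) :=
      (hφmeas.comp (measurable_const.sub measurable_id)).mul hρmeas
    have hIO : IntegrableOn (fun z => φ (x - z) * ρ z)
        ((fun z : Euc d => x - z) '' tsupport φ) volume := by
      have hρK := hρloc.integrableOn_isCompact hK
      refine (hρK.const_mul M).mono' hmeas.aestronglyMeasurable.restrict ?_
      refine Filter.Eventually.of_forall fun z => ?_
      have h1 : |φ (x - z) * ρ z| = φ (x - z) * ρ z := by
        rw [abs_of_nonneg (mul_nonneg (hφnonneg _) (hρnonneg _))]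
      rw [Real.norm_eq_abs, h1]
      exact mul_le_mul_of_nonneg_right (hM _) (hρnonneg _)
    refine hIO.integrable_of_forall_notMem_eq_zero fun z hz => ?_
    have : φ (x - z) = 0 := by
      by_contra h
      exact hz ⟨x - z, subset_tsupport φ h, sub_sub_cancel x z⟩
    simp [this]
  -- each point of A gives a ball of μ-measure zero
  have hball : ∀ x ∈ A, μ (Metric.ball x r₁) = 0 := by
    intro x hx
    have h0 : (fun z => φ (x - z) * ρ z) =ᵐ[volume] 0 :=
      (integral_eq_zero_iff_of_nonneg
        (fun z => mul_nonneg (hφnonneg _) (hρnonneg _)) (hint x)).mp hx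
    have hmb : MeasurableSet (Metric.ball x r₁) := measurableSet_ball
    rw [hμ, withDensity_apply _ hmb]
    have : ∀ᵐ z ∂(volume.restrict (Metric.ball x r₁)),
        ENNReal.ofReal (ρ z) = 0 := by
      filter_upwards [ae_restrict_of_ae h0, ae_restrict_mem hmb] with z hz hzball
      have hφpos : 0 < φ (x - z) := by
        refine lt_of_lt_of_le hc (hcφ _ ?_)
        have := Metric.mem_ball.mp hzball
        rw [dist_eq_norm] at this
        rw [show x - z = -(z - x) by abel, norm_neg]
        exact this.le
      have : ρ z = 0 := by
        by_contra h
        have hρpos : 0 < ρ z := lt_of_le_of_ne (hρnonneg z) (Ne.symm h)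
        have := mul_pos hφpos hρpos
        simp only [Pi.zero_apply] at hz
        exact this.ne' hz
      simp [this]
    calc ∫⁻ z in Metric.ball x r₁, ENNReal.ofReal (ρ z)
        = ∫⁻ _ in Metric.ball x r₁, 0 := lintegral_congr_ae this
      _ = 0 := lintegral_zero
  -- countable subcover
  have hAsub : A ⊆ ⋃ x : A, Metric.ball (x : Euc d) r₁ := fun x hx =>
    Set.mem_iUnion.mpr ⟨⟨x, hx⟩, Metric.mem_ball_self hr₁⟩
  obtain ⟨T, hTc, hTU⟩ := TopologicalSpace.isOpen_iUnion_countable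
    (fun x : A => Metric.ball (x : Euc d) r₁) (fun _ => Metric.isOpen_ball)
  set U : Set (Euc d) := ⋃ x : A, Metric.ball (x : Euc d) r₁ with hU
  have hμU : μ U = 0 := by
    rw [← hTU]
    refine measure_biUnion_null_iff hTc |>.mpr fun x _ => hball x x.2
  have hUopen : IsOpen U := isOpen_iUnion fun _ => Metric.isOpen_ball
  have hvol : volume ({z | ENNReal.ofReal (ρ z) ≠ 0} ∩ U) = 0 := by
    rw [← withDensity_apply_eq_zero hρmeas.ennreal_ofReal]
    exact hμU
  filter_upwards [measure_eq_zero_iff_ae_notMem.mp hvol] with x hx hxA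
  by_contra h
  have hρpos : 0 < ρ x := lt_of_le_of_ne (hρnonneg x) (Ne.symm h)
  exact hx ⟨by simp [ENNReal.ofReal_eq_zero, not_le, hρpos], hAsub hxA⟩
end

section
/- Let d ≥ 1, let 0 < r₁ < r₂, and let φ : ℝ^d → [0,∞) be measurable and bounded with inf_{|x| ≤ r₁} φ(x) > 0 and φ(x) = 0 for |x| > r₂. Let R > 0, let θ_R : ℝ^d → ℝ^d be measurable with |θ_R(w)| ≤ |w|, and let θ ∈ (0,1). Then there exists a constant C, depending only on d, φ and θ, such that for every integrable f : ℝ^d × ℝ^d → [0,∞), ∫_{ℝ^{2d}} |u_R[f](x)|² f(x,v)² dx dv ≤ C ( ∫_{ℝ^{2d}} (1 + |v|^{2/(1−θ)}) f(x,v) dx dv + ∫_{ℝ^{2d}} f(x,v)^{1 + 1/θ} dx dv ). -/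
open MeasureTheory
open scoped ENNReal

/-- Young's inequality step. -/
private lemma young_step {u fz θ : ℝ} (hu : 0 ≤ u) (hf : 0 ≤ fz) (h0 : 0 < θ) (h1 : θ < 1) :
    u ^ (2:ℕ) * fz ^ (2:ℕ) ≤ u ^ (2/(1-θ)) * fz + fz ^ (1 + 1/θ) := by
  have h1θ : 0 < 1 - θ := by linarith
  have hpq : (1/(1-θ)).HolderConjugate (1/θ) := by
    rw [Real.holderConjugate_iff]
    constructor
    · rw [lt_div_iff₀ h1θ, one_mul]; linarith
    · rw [one_div, one_div, inv_inv, inv_inv]; ring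
  have key := Real.young_inequality_of_nonneg
    (a := u ^ (2:ℕ) * fz ^ (1-θ)) (b := fz ^ (1+θ))
    (mul_nonneg (by positivity) (Real.rpow_nonneg hf _)) (Real.rpow_nonneg hf _) hpq
  have e1 : u ^ (2:ℕ) * fz ^ (2:ℕ) = (u ^ (2:ℕ) * fz ^ (1-θ)) * fz ^ (1+θ) := by
    rw [mul_assoc, ← Real.rpow_add_of_nonneg hf (by linarith) (by linarith)]
    norm_num
  have e2 : (u ^ (2:ℕ) * fz ^ (1-θ)) ^ (1/(1-θ)) = u ^ (2/(1-θ)) * fz := by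
    rw [Real.mul_rpow (by positivity) (Real.rpow_nonneg hf _),
      ← Real.rpow_natCast u 2, ← Real.rpow_mul hu, ← Real.rpow_mul hf]
    rw [show ((2:ℕ):ℝ) * (1/(1-θ)) = 2/(1-θ) by push_cast; ring,
      show (1-θ) * (1/(1-θ)) = 1 by field_simp, Real.rpow_one]
  have e3 : (fz ^ (1+θ)) ^ (1/θ) = fz ^ (1 + 1/θ) := by
    rw [← Real.rpow_mul hf, show (1+θ) * (1/θ) = 1 + 1/θ by field_simp; ring]
  calc u ^ (2:ℕ) * fz ^ (2:ℕ) = (u ^ (2:ℕ) * fz ^ (1-θ)) * fz ^ (1+θ) := e1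
    _ ≤ (u ^ (2:ℕ) * fz ^ (1-θ)) ^ (1/(1-θ)) / (1/(1-θ)) + (fz ^ (1+θ)) ^ (1/θ) / (1/θ) := key
    _ ≤ (u ^ (2:ℕ) * fz ^ (1-θ)) ^ (1/(1-θ)) + (fz ^ (1+θ)) ^ (1/θ) := by
        gcongr
        · exact div_le_self (Real.rpow_nonneg (mul_nonneg (by positivity) (Real.rpow_nonneg hf _)) _) (Real.holderConjugate_iff.1 hpq).1.le
        · exact div_le_self (Real.rpow_nonneg (Real.rpow_nonneg hf _) _) (Real.holderConjugate_iff.1 hpq.symm).1.le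
    _ = u ^ (2/(1-θ)) * fz + fz ^ (1 + 1/θ) := by rw [e2, e3]

/-- Hölder / Jensen step in `ℝ≥0∞`. -/
private lemma holder_step {α : Type*} [MeasurableSpace α] {μ : Measure α}
    {G H : α → ℝ≥0∞} (hG : Measurable G) (hH : Measurable H) {p : ℝ} (hp : 1 < p)
    {D : ℝ≥0∞} (hD0 : D ≠ 0) (hDt : D ≠ ⊤) (hGD : ∫⁻ a, G a ∂μ ≤ D) :
    (D⁻¹ * ∫⁻ a, H a * G a ∂μ) ^ p ≤ (∫⁻ a, H a ^ p * G a ∂μ) * D⁻¹ := by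
  have hp0 : (0:ℝ) < p := lt_trans one_pos hp
  have hp1 : p - 1 ≥ 0 := by linarith
  have hpq : p.HolderConjugate (p/(p-1)) := by
    rw [Real.holderConjugate_iff]
    constructor
    · exact hp
    · rw [inv_div]; field_simp; ring
  -- Hölder with a = H * G^{1/p}, b = G^{1-1/p}
  have hmain : (∫⁻ a, H a * G a ∂μ) ≤
      (∫⁻ a, H a ^ p * G a ∂μ) ^ (1/p) * (∫⁻ a, G a ∂μ) ^ ((p-1)/p) := by
    have ha : AEMeasurable (fun a => H a * G a ^ (1/p)) μ :=
      (hH.mul (hG.pow_const _)).aemeasurable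
    have hb : AEMeasurable (fun a => G a ^ (1 - 1/p)) μ := (hG.pow_const _).aemeasurable
    have h := ENNReal.lintegral_mul_le_Lp_mul_Lq μ hpq ha hb
    have e1 : ∀ a, (fun a => H a * G a ^ (1/p)) a * (fun a => G a ^ (1 - 1/p)) a
        = H a * G a := by
      intro a
      rw [mul_assoc, ← ENNReal.rpow_add_of_nonneg _ _ (by positivity)
        (by rw [sub_nonneg, div_le_one hp0]; linarith)]
      norm_num
    have e2 : ∀ a, (H a * G a ^ (1/p)) ^ p = H a ^ p * G a := by
      intro a
      rw [ENNReal.mul_rpow_of_nonneg _ _ hp0.le, ← ENNReal.rpow_mul,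
        one_div_mul_cancel hp0.ne', ENNReal.rpow_one]
    have e3 : ∀ a, (G a ^ (1 - 1/p)) ^ (p/(p-1)) = G a := by
      intro a
      have h1 : p - 1 ≠ 0 := by linarith
      rw [← ENNReal.rpow_mul, show (1 - 1/p) * (p/(p-1)) = 1 by field_simp,
        ENNReal.rpow_one]
    calc (∫⁻ a, H a * G a ∂μ)
        = ∫⁻ a, (fun a => H a * G a ^ (1/p)) a * (fun a => G a ^ (1 - 1/p)) a ∂μ := by
          exact (lintegral_congr e1).symm
      _ ≤ (∫⁻ a, (H a * G a ^ (1/p)) ^ p ∂μ) ^ (1/p) *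
            (∫⁻ a, (G a ^ (1 - 1/p)) ^ (p/(p-1)) ∂μ) ^ (1/(p/(p-1))) := h
      _ = (∫⁻ a, H a ^ p * G a ∂μ) ^ (1/p) * (∫⁻ a, G a ∂μ) ^ ((p-1)/p) := by
          rw [lintegral_congr e2, lintegral_congr e3, one_div_div]
  calc (D⁻¹ * ∫⁻ a, H a * G a ∂μ) ^ p
      ≤ (D⁻¹ * ((∫⁻ a, H a ^ p * G a ∂μ) ^ (1/p) * D ^ ((p-1)/p))) ^ p := by
        refine ENNReal.rpow_le_rpow (mul_le_mul_right ?_ _) hp0.le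
        exact le_trans hmain (mul_le_mul_right (ENNReal.rpow_le_rpow hGD (by positivity)) _)
    _ = (∫⁻ a, H a ^ p * G a ∂μ) * D⁻¹ := by
        rw [ENNReal.mul_rpow_of_nonneg _ _ hp0.le, ENNReal.mul_rpow_of_nonneg _ _ hp0.le,
          ← ENNReal.rpow_mul, ← ENNReal.rpow_mul, one_div_mul_cancel hp0.ne',
          ENNReal.rpow_one, div_mul_cancel₀ _ hp0.ne', ENNReal.inv_rpow]
        rw [show D ^ (p-1) = D ^ p * D⁻¹ by
          rw [← ENNReal.rpow_neg_one D, ← ENNReal.rpow_add _ _ hD0 hDt, sub_eq_add_neg]]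
        rw [show (D ^ p)⁻¹ * ((∫⁻ a, H a ^ p * G a ∂μ) * (D ^ p * D⁻¹))
            = ((D ^ p)⁻¹ * D ^ p) * ((∫⁻ a, H a ^ p * G a ∂μ) * D⁻¹) by ring]
        rw [ENNReal.inv_mul_cancel (ENNReal.rpow_pos (lt_of_le_of_ne zero_le (Ne.symm hD0)) hDt).ne' (ENNReal.rpow_ne_top_of_nonneg hp0.le hDt),
          one_mul]

/-- Pointwise bound on the numerator/denominator of `uReg`. -/
private lemma key1 {d : ℕ} {R : ℝ} (hR : 0 < R) {φ : Euc d → ℝ} (hφmeas : Measurable φ)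
    (hφnonneg : ∀ x, 0 ≤ φ x) {M : ℝ} (hM : ∀ x, φ x ≤ M)
    {θR : Euc d → Euc d} (hθRle : ∀ w, ‖θR w‖ ≤ ‖w‖)
    {f : Euc d × Euc d → ℝ} (hf0 : ∀ z, 0 ≤ f z) (hfi : Integrable f) (x : Euc d) :
    ENNReal.ofReal ‖uReg d R φ θR f x‖ ≤
      (ENNReal.ofReal R⁻¹ +
          ∫⁻ ζ : Euc d × Euc d, ENNReal.ofReal (φ (x - ζ.1)) * ENNReal.ofReal (f ζ))⁻¹ *
        ∫⁻ ζ : Euc d × Euc d,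
          ENNReal.ofReal ‖ζ.2‖ * (ENNReal.ofReal (φ (x - ζ.1)) * ENNReal.ofReal (f ζ)) := by
  have hmul0 : ∀ ζ : Euc d × Euc d, 0 ≤ φ (x - ζ.1) * f ζ :=
    fun ζ => mul_nonneg (hφnonneg _) (hf0 _)
  have hint : Integrable fun ζ : Euc d × Euc d => φ (x - ζ.1) * f ζ :=
    hfi.bdd_mul ((hφmeas.comp (measurable_const.sub measurable_fst)).aestronglyMeasurable)
      (c := M) (Filter.Eventually.of_forall fun ζ => by rw [Real.norm_eq_abs, abs_of_nonneg (hφnonneg _)]; exact hM _)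
  have hA0 : 0 ≤ ∫ ζ : Euc d × Euc d, φ (x - ζ.1) * f ζ := integral_nonneg hmul0
  have hDpos : 0 < R⁻¹ + ∫ ζ : Euc d × Euc d, φ (x - ζ.1) * f ζ := by
    have := inv_pos.2 hR; linarith
  have hDeq : ENNReal.ofReal (R⁻¹ + ∫ ζ : Euc d × Euc d, φ (x - ζ.1) * f ζ) =
      ENNReal.ofReal R⁻¹ +
        ∫⁻ ζ : Euc d × Euc d, ENNReal.ofReal (φ (x - ζ.1)) * ENNReal.ofReal (f ζ) := by
    rw [ENNReal.ofReal_add (by positivity) hA0,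
      ofReal_integral_eq_lintegral_ofReal hint (Filter.Eventually.of_forall hmul0)]
    congr 1
    exact lintegral_congr fun ζ => ENNReal.ofReal_mul (hφnonneg _)
  rw [uReg, norm_smul, Real.norm_eq_abs, abs_of_pos (inv_pos.2 hDpos),
    ENNReal.ofReal_mul (inv_nonneg.2 hDpos.le), ENNReal.ofReal_inv_of_pos hDpos, hDeq]
  refine mul_le_mul_right ?_ _
  calc ENNReal.ofReal ‖∫ ζ : Euc d × Euc d, (φ (x - ζ.1) * f ζ) • θR ζ.2‖
      = ‖∫ ζ : Euc d × Euc d, (φ (x - ζ.1) * f ζ) • θR ζ.2‖ₑ := ofReal_norm_eq_enorm _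
    _ ≤ ∫⁻ ζ : Euc d × Euc d, ‖(φ (x - ζ.1) * f ζ) • θR ζ.2‖ₑ :=
        enorm_integral_le_lintegral_enorm _
    _ ≤ ∫⁻ ζ : Euc d × Euc d,
          ENNReal.ofReal ‖ζ.2‖ * (ENNReal.ofReal (φ (x - ζ.1)) * ENNReal.ofReal (f ζ)) := by
        refine lintegral_mono fun ζ => ?_
        calc (‖(φ (x - ζ.1) * f ζ) • θR ζ.2‖ₑ : ℝ≥0∞)
            = ENNReal.ofReal ‖θR ζ.2‖ * (ENNReal.ofReal (φ (x - ζ.1)) * ENNReal.ofReal (f ζ)) := by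
              rw [enorm_smul, Real.enorm_eq_ofReal (hmul0 ζ),
                ENNReal.ofReal_mul (hφnonneg _), ← ofReal_norm_eq_enorm, mul_comm]
          _ ≤ ENNReal.ofReal ‖ζ.2‖ * (ENNReal.ofReal (φ (x - ζ.1)) * ENNReal.ofReal (f ζ)) :=
              mul_le_mul_left (ENNReal.ofReal_le_ofReal (hθRle _)) _

/-- Covering argument: uniform bound on `∫ φ(x−y) ρ(x) / D(x) dx`. -/
private lemma covering_step {d : ℕ} {r₁ r₂ : ℝ} (hr₁ : 0 < r₁)
    {φ : Euc d → ℝ} (hφmeas : Measurable φ) (hφnonneg : ∀ x, 0 ≤ φ x) {M c : ℝ} (hM : ∀ x, φ x ≤ M) (hc : 0 < c)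
    (hcφ : ∀ x, ‖x‖ ≤ r₁ → c ≤ φ x) (hφsupp : ∀ x, r₂ < ‖x‖ → φ x = 0)
    {T : Finset (Euc d)}
    (hT : Metric.closedBall (0 : Euc d) r₂ ⊆ ⋃ t ∈ T, Metric.ball t (r₁/2))
    {ρ : Euc d → ℝ≥0∞} (hρm : Measurable ρ) {D : Euc d → ℝ≥0∞}
    (hDlow : ∀ x : Euc d, (∫⁻ x', ENNReal.ofReal (φ (x - x')) * ρ x') ≤ D x) (y : Euc d) :
    (∫⁻ x, ENNReal.ofReal (φ (x - y)) * ((D x)⁻¹ * ρ x)) ≤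
      (T.card : ℝ≥0∞) * (ENNReal.ofReal M * (ENNReal.ofReal c)⁻¹) := by
  set m : Euc d → ℝ≥0∞ := fun t => ∫⁻ x' in Metric.ball (y + t) (r₁/2), ρ x' with hm
  -- lower bound on D on each ball of the cover
  have hDlow' : ∀ t : Euc d, ∀ x ∈ Metric.ball (y + t) (r₁/2),
      ENNReal.ofReal c * m t ≤ D x := by
    intro t x hx
    refine le_trans ?_ (hDlow x)
    calc ENNReal.ofReal c * m t
        = ∫⁻ x' in Metric.ball (y + t) (r₁/2), ENNReal.ofReal c * ρ x' :=
          (lintegral_const_mul _ hρm).symm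
      _ ≤ ∫⁻ x' in Metric.ball (y + t) (r₁/2), ENNReal.ofReal (φ (x - x')) * ρ x' := by
          refine setLIntegral_mono ((ENNReal.measurable_ofReal.comp
            (hφmeas.comp (measurable_const.sub measurable_id))).mul hρm) fun x' hx' => ?_
          refine mul_le_mul_left (ENNReal.ofReal_le_ofReal (hcφ _ ?_)) _
          have h1 : dist x (y + t) < r₁/2 := Metric.mem_ball.1 hx
          have h2 : dist x' (y + t) < r₁/2 := Metric.mem_ball.1 hx'
          have := dist_triangle_right x x' (y + t)
          rw [← dist_eq_norm]
          linarith
      _ ≤ ∫⁻ x', ENNReal.ofReal (φ (x - x')) * ρ x' := setLIntegral_le_lintegral _ _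
  -- pointwise domination by a finite sum of indicators
  have hcover : ∀ x : Euc d, ENNReal.ofReal (φ (x - y)) * ((D x)⁻¹ * ρ x) ≤
      ∑ t ∈ T, Set.indicator (Metric.ball (y + t) (r₁/2))
        (fun x' => ENNReal.ofReal M * (ENNReal.ofReal c * m t)⁻¹ * ρ x') x := by
    intro x
    by_cases hxy : ‖x - y‖ ≤ r₂
    · have hmem : x - y ∈ Metric.closedBall (0 : Euc d) r₂ := by
        rw [Metric.mem_closedBall, dist_zero_right]; exact hxy
      obtain ⟨t, ht, hxt⟩ := Set.mem_iUnion₂.1 (hT hmem)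
      have hxball : x ∈ Metric.ball (y + t) (r₁/2) := by
        rw [Metric.mem_ball] at hxt ⊢
        rw [dist_eq_norm] at hxt ⊢
        have : x - (y + t) = x - y - t := by abel
        rwa [this]
      refine le_trans ?_ (Finset.single_le_sum (f := fun t => Set.indicator _
        (fun x' => ENNReal.ofReal M * (ENNReal.ofReal c * m t)⁻¹ * ρ x') x)
        (fun i _ => zero_le) ht)
      rw [Set.indicator_of_mem hxball]
      rw [← mul_assoc]
      refine mul_le_mul_left (mul_le_mul' (ENNReal.ofReal_le_ofReal (hM _)) ?_) _
      exact ENNReal.inv_le_inv' (hDlow' t x hxball)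
    · rw [hφsupp _ (not_le.1 hxy)]
      simp
  calc (∫⁻ x, ENNReal.ofReal (φ (x - y)) * ((D x)⁻¹ * ρ x))
      ≤ ∫⁻ x, ∑ t ∈ T, Set.indicator (Metric.ball (y + t) (r₁/2))
          (fun x' => ENNReal.ofReal M * (ENNReal.ofReal c * m t)⁻¹ * ρ x') x :=
        lintegral_mono hcover
    _ = ∑ t ∈ T, ∫⁻ x, Set.indicator (Metric.ball (y + t) (r₁/2))
          (fun x' => ENNReal.ofReal M * (ENNReal.ofReal c * m t)⁻¹ * ρ x') x :=
        lintegral_finset_sum _ fun t _ =>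
          ((measurable_const.mul hρm).indicator Metric.isOpen_ball.measurableSet)
    _ ≤ ∑ t ∈ T, ENNReal.ofReal M * (ENNReal.ofReal c)⁻¹ := by
        refine Finset.sum_le_sum fun t _ => ?_
        rw [lintegral_indicator Metric.isOpen_ball.measurableSet]
        rcases eq_or_ne (m t) 0 with h0 | h0
        · have hz : ρ =ᵐ[volume.restrict (Metric.ball (y + t) (r₁/2))] 0 :=
            (lintegral_eq_zero_iff hρm).1 h0
          have : (fun x' => ENNReal.ofReal M * (ENNReal.ofReal c * m t)⁻¹ * ρ x')
              =ᵐ[volume.restrict (Metric.ball (y + t) (r₁/2))] 0 := by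
            filter_upwards [hz] with x' hx'
            simp [hx']
          rw [lintegral_congr_ae this]
          simp
        · have hne : ENNReal.ofReal M * (ENNReal.ofReal c * m t)⁻¹ ≠ ⊤ :=
            ENNReal.mul_ne_top ENNReal.ofReal_ne_top
              (ENNReal.inv_ne_top.2 (mul_ne_zero
                (ENNReal.ofReal_pos.2 hc).ne' h0))
          rw [lintegral_const_mul' _ _ hne]
          rw [ENNReal.mul_inv (Or.inl (ENNReal.ofReal_pos.2 hc).ne') (Or.inl ENNReal.ofReal_ne_top)]
          have hm1 : (m t)⁻¹ * m t ≤ 1 := by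
            rcases eq_or_ne (m t) ⊤ with h | h
            · simp [h]
            · rw [ENNReal.inv_mul_cancel h0 h]
          calc ENNReal.ofReal M * ((ENNReal.ofReal c)⁻¹ * (m t)⁻¹) * m t
              = ENNReal.ofReal M * (ENNReal.ofReal c)⁻¹ * ((m t)⁻¹ * m t) := by ring
            _ ≤ ENNReal.ofReal M * (ENNReal.ofReal c)⁻¹ * 1 := mul_le_mul_right hm1 _
            _ = ENNReal.ofReal M * (ENNReal.ofReal c)⁻¹ := mul_one _
    _ = (T.card : ℝ≥0∞) * (ENNReal.ofReal M * (ENNReal.ofReal c)⁻¹) := by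
        rw [Finset.sum_const, nsmul_eq_mul]


set_option maxHeartbeats 1000000 in
/-- the weighted `L²` bound on the local alignment drift:
`∫ |u_R[f](x)|² f² dz ≤ C ( ∫ (1+|v|^{2/(1−θ)}) f dz + ∫ f^{1+1/θ} dz )`, with a constant
depending only on `d`, `φ` and `θ` (not on `R`, `θ_R` or `f`). -/
theorem stmt13 (d : ℕ) (hd : 1 ≤ d) (r₁ r₂ : ℝ) (hr₁ : 0 < r₁) (hr₁₂ : r₁ < r₂)
    (φ : Euc d → ℝ) (hφmeas : Measurable φ) (hφnonneg : ∀ x, 0 ≤ φ x)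
    (hφbdd : ∃ M : ℝ, ∀ x, φ x ≤ M)
    (hφinf : ∃ c : ℝ, 0 < c ∧ ∀ x, ‖x‖ ≤ r₁ → c ≤ φ x)
    (hφsupp : ∀ x, r₂ < ‖x‖ → φ x = 0)
    (θ : ℝ) (hθ : θ ∈ Set.Ioo (0 : ℝ) 1) :
    ∃ C : ℝ, 0 < C ∧ ∀ R : ℝ, 0 < R → ∀ θR : Euc d → Euc d, Measurable θR →
      (∀ w, ‖θR w‖ ≤ ‖w‖) →
      ∀ f : Euc d × Euc d → ℝ, Measurable f → (∀ z, 0 ≤ f z) → Integrable f →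
      (∫⁻ z : Euc d × Euc d,
          ENNReal.ofReal (‖uReg d R φ θR f z.1‖ ^ (2 : ℕ) * f z ^ (2 : ℕ)))
        ≤ ENNReal.ofReal C *
          ((∫⁻ z : Euc d × Euc d,
              ENNReal.ofReal ((1 + ‖z.2‖ ^ (2 / (1 - θ))) * f z))
            + ∫⁻ z : Euc d × Euc d, ENNReal.ofReal (f z ^ (1 + 1 / θ))) := by
  obtain ⟨M, hM⟩ := hφbdd
  obtain ⟨c, hc, hcφ⟩ := hφinf
  obtain ⟨hθ0, hθ1⟩ := hθ
  have h1θ : 0 < 1 - θ := by linarith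
  set p : ℝ := 2 / (1 - θ) with hp_def
  have hp0 : 0 < p := by positivity
  have hp1 : 1 < p := by
    rw [hp_def, lt_div_iff₀ h1θ, one_mul]; linarith
  -- the finite cover of the ball of radius r₂ by balls of radius r₁/2
  obtain ⟨T, hT⟩ : ∃ T : Finset (Euc d),
      Metric.closedBall (0 : Euc d) r₂ ⊆ ⋃ t ∈ T, Metric.ball t (r₁/2) := by
    refine (isCompact_closedBall (0 : Euc d) r₂).elim_finite_subcover
      (fun t : Euc d => Metric.ball t (r₁/2)) (fun t => Metric.isOpen_ball) ?_
    intro x _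
    exact Set.mem_iUnion.2 ⟨x, Metric.mem_ball_self (by positivity)⟩
  have hMc : 0 < M := lt_of_lt_of_le hc (le_trans (hcφ 0 (by simp [hr₁.le])) (hM 0))
  refine ⟨(T.card : ℝ) * (M / c) + 1, by positivity, ?_⟩
  intro R hR θR hθRm hθRle f hfm hf0 hfi
  -- notation
  set F : Euc d × Euc d → ℝ≥0∞ := fun z => ENNReal.ofReal (f z) with hF_def
  set Dε : Euc d → ℝ≥0∞ := fun x =>
    ENNReal.ofReal R⁻¹ + ∫⁻ ζ : Euc d × Euc d, ENNReal.ofReal (φ (x - ζ.1)) * F ζ with hD_def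
  set ρ : Euc d → ℝ≥0∞ := fun x => ∫⁻ v, F (x, v) with hρ_def
  set Np : Euc d → ℝ≥0∞ := fun x =>
    ∫⁻ ζ : Euc d × Euc d, ENNReal.ofReal ‖ζ.2‖ ^ p * (ENNReal.ofReal (φ (x - ζ.1)) * F ζ)
    with hNp_def
  -- measurability
  have hFm : Measurable F := ENNReal.measurable_ofReal.comp hfm
  have hgm : ∀ x : Euc d, Measurable fun ζ : Euc d × Euc d =>
      ENNReal.ofReal (φ (x - ζ.1)) * F ζ := fun x =>
    (ENNReal.measurable_ofReal.comp (hφmeas.comp (measurable_const.sub measurable_fst))).mul hFm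
  have hgm2 : Measurable fun q : Euc d × (Euc d × Euc d) =>
      ENNReal.ofReal (φ (q.1 - q.2.1)) * F q.2 :=
    (ENNReal.measurable_ofReal.comp (hφmeas.comp
      (measurable_fst.sub (measurable_fst.comp measurable_snd)))).mul (hFm.comp measurable_snd)
  have hρm : Measurable ρ := hFm.lintegral_prod_right'
  have hDm : Measurable Dε := measurable_const.add hgm2.lintegral_prod_right'
  have hHpm : Measurable fun ζ : Euc d × Euc d => ENNReal.ofReal ‖ζ.2‖ ^ p :=
    (ENNReal.measurable_ofReal.comp measurable_snd.norm).pow_const _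
  have hNpm : Measurable Np := by
    refine Measurable.lintegral_prod_right' (f := fun q : Euc d × (Euc d × Euc d) =>
      ENNReal.ofReal ‖q.2.2‖ ^ p * (ENNReal.ofReal (φ (q.1 - q.2.1)) * F q.2)) ?_
    exact (hHpm.comp measurable_snd).mul hgm2
  -- finiteness and nonvanishing of the denominator
  have hFtot : (∫⁻ z, F z) ≠ ⊤ := by
    rw [← ofReal_integral_eq_lintegral_ofReal hfi (Filter.Eventually.of_forall hf0)]
    exact ENNReal.ofReal_ne_top
  have hD0 : ∀ x, Dε x ≠ 0 := fun x =>
    (lt_of_lt_of_le (ENNReal.ofReal_pos.2 (inv_pos.2 hR)) le_self_add).ne'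
  have hDge : ∀ x : Euc d,
      (∫⁻ ζ : Euc d × Euc d, ENNReal.ofReal (φ (x - ζ.1)) * F ζ) ≤ Dε x := by
    intro x
    show (∫⁻ ζ : Euc d × Euc d, ENNReal.ofReal (φ (x - ζ.1)) * F ζ) ≤
      ENNReal.ofReal R⁻¹ + ∫⁻ ζ : Euc d × Euc d, ENNReal.ofReal (φ (x - ζ.1)) * F ζ
    exact le_add_self
  have hDt : ∀ x, Dε x ≠ ⊤ := by
    intro x
    have hb : (∫⁻ ζ : Euc d × Euc d, ENNReal.ofReal (φ (x - ζ.1)) * F ζ)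
        ≤ ENNReal.ofReal M * ∫⁻ z, F z := by
      rw [← lintegral_const_mul' (ENNReal.ofReal M) _ ENNReal.ofReal_ne_top]
      exact lintegral_mono fun ζ =>
        mul_le_mul_left (ENNReal.ofReal_le_ofReal (hM _)) _
    exact ENNReal.add_ne_top.2 ⟨ENNReal.ofReal_ne_top,
      ne_top_of_le_ne_top (ENNReal.mul_ne_top ENNReal.ofReal_ne_top hFtot) hb⟩
  -- the key pointwise estimate
  have key3 : ∀ x : Euc d,
      ENNReal.ofReal ‖uReg d R φ θR f x‖ ^ p ≤ Np x * (Dε x)⁻¹ := by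
    intro x
    have h1 := key1 hR hφmeas hφnonneg hM hθRle hf0 hfi x
    have h2 := holder_step (μ := (volume : Measure (Euc d × Euc d)))
      (G := fun ζ : Euc d × Euc d => ENNReal.ofReal (φ (x - ζ.1)) * F ζ)
      (H := fun ζ : Euc d × Euc d => ENNReal.ofReal ‖ζ.2‖)
      (hgm x) (ENNReal.measurable_ofReal.comp measurable_snd.norm) hp1
      (hD0 x) (hDt x) (hDge x)
    exact le_trans (ENNReal.rpow_le_rpow h1 hp0.le) h2
  -- the density identity for the denominator
  have hgρ : ∀ x : Euc d, (∫⁻ ζ : Euc d × Euc d, ENNReal.ofReal (φ (x - ζ.1)) * F ζ) =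
      ∫⁻ x', ENNReal.ofReal (φ (x - x')) * ρ x' := by
    intro x
    rw [Measure.volume_eq_prod, lintegral_prod _ (hgm x).aemeasurable]
    exact lintegral_congr fun x' => lintegral_const_mul (ENNReal.ofReal (φ (x - x')))
      (f := fun v => F (x', v)) (hFm.comp measurable_prodMk_left)
  have hDlow : ∀ x : Euc d, (∫⁻ x', ENNReal.ofReal (φ (x - x')) * ρ x') ≤ Dε x := by
    intro x; rw [← hgρ x]; exact hDge x
  -- the covering bound
  set K : ℝ≥0∞ := (T.card : ℝ≥0∞) * (ENNReal.ofReal M * (ENNReal.ofReal c)⁻¹) with hK_def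
  have hB : ∀ y : Euc d,
      (∫⁻ x, ENNReal.ofReal (φ (x - y)) * ((Dε x)⁻¹ * ρ x)) ≤ K :=
    covering_step hr₁ hφmeas hφnonneg hM hc hcφ hφsupp hT hρm hDlow
  -- main chain
  set S1 : ℝ≥0∞ := ∫⁻ z : Euc d × Euc d, ENNReal.ofReal ((1 + ‖z.2‖ ^ p) * f z) with hS1_def
  set S2 : ℝ≥0∞ := ∫⁻ z : Euc d × Euc d, ENNReal.ofReal (f z ^ (1 + 1/θ)) with hS2_def
  have main : (∫⁻ z : Euc d × Euc d,
      ENNReal.ofReal (‖uReg d R φ θR f z.1‖ ^ (2 : ℕ) * f z ^ (2 : ℕ))) ≤ S1 * K + S2 := by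
    calc (∫⁻ z : Euc d × Euc d,
        ENNReal.ofReal (‖uReg d R φ θR f z.1‖ ^ (2 : ℕ) * f z ^ (2 : ℕ)))
        ≤ ∫⁻ z : Euc d × Euc d,
            (ENNReal.ofReal (‖uReg d R φ θR f z.1‖ ^ p * f z)
              + ENNReal.ofReal (f z ^ (1 + 1/θ))) := by
          refine lintegral_mono fun z => ?_
          rw [← ENNReal.ofReal_add (mul_nonneg (Real.rpow_nonneg (norm_nonneg _) _) (hf0 z))
            (Real.rpow_nonneg (hf0 z) _)]
          exact ENNReal.ofReal_le_ofReal (young_step (norm_nonneg _) (hf0 z) hθ0 hθ1)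
      _ = (∫⁻ z : Euc d × Euc d, ENNReal.ofReal (‖uReg d R φ θR f z.1‖ ^ p * f z)) + S2 :=
          lintegral_add_right _ (ENNReal.measurable_ofReal.comp (hfm.pow_const _))
      _ ≤ S1 * K + S2 := by
          refine add_le_add_left ?_ _
          -- rewrite the integrand
          have e0 : ∀ z : Euc d × Euc d, ENNReal.ofReal (‖uReg d R φ θR f z.1‖ ^ p * f z)
              = ENNReal.ofReal ‖uReg d R φ θR f z.1‖ ^ p * F z := by
            intro z
            rw [ENNReal.ofReal_mul (Real.rpow_nonneg (norm_nonneg _) _),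
              ← ENNReal.ofReal_rpow_of_nonneg (norm_nonneg _) hp0.le]
          rw [lintegral_congr e0]
          calc (∫⁻ z : Euc d × Euc d, ENNReal.ofReal ‖uReg d R φ θR f z.1‖ ^ p * F z)
              ≤ ∫⁻ z : Euc d × Euc d, (Np z.1 * (Dε z.1)⁻¹) * F z :=
                lintegral_mono fun z => mul_le_mul_left (key3 z.1) _
            _ = ∫⁻ x, (Np x * (Dε x)⁻¹) * ρ x := by
                have hWFm : Measurable fun z : Euc d × Euc d =>
                    Np z.1 * (Dε z.1)⁻¹ * F z :=
                  ((hNpm.comp measurable_fst).mul ((hDm.comp measurable_fst).inv)).mul hFm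
                rw [Measure.volume_eq_prod, lintegral_prod _ hWFm.aemeasurable]
                exact lintegral_congr fun x => lintegral_const_mul (Np x * (Dε x)⁻¹)
                  (f := fun v => F (x, v)) (hFm.comp measurable_prodMk_left)
            _ = ∫⁻ x, ∫⁻ ζ : Euc d × Euc d,
                  (ENNReal.ofReal ‖ζ.2‖ ^ p * (ENNReal.ofReal (φ (x - ζ.1)) * F ζ))
                    * ((Dε x)⁻¹ * ρ x) := by
                refine lintegral_congr fun x => ?_
                rw [lintegral_mul_const _ (f := fun ζ : Euc d × Euc d => ENNReal.ofReal ‖ζ.2‖ ^ p * (ENNReal.ofReal (φ (x - ζ.1)) * F ζ)) ((hHpm).mul (hgm x)), hNp_def, mul_assoc]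
            _ = ∫⁻ ζ : Euc d × Euc d, ∫⁻ x,
                  (ENNReal.ofReal ‖ζ.2‖ ^ p * (ENNReal.ofReal (φ (x - ζ.1)) * F ζ))
                    * ((Dε x)⁻¹ * ρ x) := by
                refine lintegral_lintegral_swap ?_
                refine Measurable.aemeasurable ?_
                refine Measurable.mul ?_ ?_
                · exact ((hHpm.comp measurable_snd).mul hgm2)
                · exact ((hDm.inv.mul hρm).comp measurable_fst)
            _ = ∫⁻ ζ : Euc d × Euc d, (ENNReal.ofReal ‖ζ.2‖ ^ p * F ζ) *
                  ∫⁻ x, ENNReal.ofReal (φ (x - ζ.1)) * ((Dε x)⁻¹ * ρ x) := by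
                refine lintegral_congr fun ζ => ?_
                rw [← lintegral_const_mul' _ _ (ENNReal.mul_ne_top
                  (ENNReal.rpow_ne_top_of_nonneg hp0.le ENNReal.ofReal_ne_top)
                  ENNReal.ofReal_ne_top)]
                exact lintegral_congr fun x => by ring
            _ ≤ ∫⁻ ζ : Euc d × Euc d, (ENNReal.ofReal ‖ζ.2‖ ^ p * F ζ) * K :=
                lintegral_mono fun ζ => mul_le_mul_right (hB ζ.1) _
            _ = (∫⁻ ζ : Euc d × Euc d, ENNReal.ofReal ‖ζ.2‖ ^ p * F ζ) * K :=
                lintegral_mul_const _ (hHpm.mul hFm)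
            _ ≤ S1 * K := by
                refine mul_le_mul_left (lintegral_mono fun ζ => ?_) _
                have h1p : (0:ℝ) ≤ 1 + ‖ζ.2‖ ^ p := by
                  have := Real.rpow_nonneg (norm_nonneg ζ.2) p; linarith
                rw [ENNReal.ofReal_mul h1p,
                  ENNReal.ofReal_rpow_of_nonneg (norm_nonneg _) hp0.le]
                exact mul_le_mul_left (ENNReal.ofReal_le_ofReal
                  (le_add_of_nonneg_left zero_le_one)) _
  -- conclude
  have hCK : K ≤ ENNReal.ofReal ((T.card : ℝ) * (M / c) + 1) := by
    rw [ENNReal.ofReal_add (by positivity) zero_le_one, ENNReal.ofReal_one,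
      ENNReal.ofReal_mul (by positivity), ENNReal.ofReal_natCast,
      ENNReal.ofReal_div_of_pos hc, div_eq_mul_inv]
    exact le_self_add
  have hC1 : (1 : ℝ≥0∞) ≤ ENNReal.ofReal ((T.card : ℝ) * (M / c) + 1) := by
    rw [ENNReal.ofReal_add (by positivity) zero_le_one, ENNReal.ofReal_one]
    exact le_add_self
  calc (∫⁻ z : Euc d × Euc d,
      ENNReal.ofReal (‖uReg d R φ θR f z.1‖ ^ (2 : ℕ) * f z ^ (2 : ℕ)))
      ≤ S1 * K + S2 := main
    _ ≤ S1 * ENNReal.ofReal ((T.card : ℝ) * (M / c) + 1)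
        + S2 * ENNReal.ofReal ((T.card : ℝ) * (M / c) + 1) := by
        refine add_le_add (mul_le_mul_right hCK _) ?_
        calc S2 = S2 * 1 := (mul_one _).symm
          _ ≤ S2 * ENNReal.ofReal ((T.card : ℝ) * (M / c) + 1) := mul_le_mul_right hC1 _
    _ = ENNReal.ofReal ((T.card : ℝ) * (M / c) + 1) * (S1 + S2) := by ring
end

section
/- Let d ≥ 1, let φ : ℝ^d → ℝ be continuous with compact support, let θ ∈ (0,1), set p = 1 + 1/θ, let δ > 0 and γ = δ(1−θ). Then there exists a constant C, depending only on d, φ, θ and δ, such that for every measurable f : ℝ^d × ℝ^d → [0,∞) and every r ≥ 1, ∫_{|x| ≥ r} | ∫_{ℝ^d} φ(v) f(x,v) dv |² dx ≤ C r^{−γ} ( ∫_{ℝ^{2d}} (1 + |x|^δ) f(x,v) dx dv + ∫_{ℝ^{2d}} f(x,v)^p dx dv ). -/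
open MeasureTheory
open scoped ENNReal

/-- uniform integrability in `x` of the velocity averages
`ρ_φ(x) = ∫ φ(v) f(x,v) dv`:
`∫_{|x| ≥ r} |ρ_φ(x)|² dx ≤ C r^{−γ} ( ∫ (1+|x|^δ) f dz + ∫ f^p dz )` with
`p = 1 + 1/θ`, `γ = δ(1−θ)` and `C = C(d, φ, θ, δ)`. -/
theorem stmt14 (d : ℕ) (hd : 1 ≤ d)
    (φ : Euc d → ℝ) (hφcont : Continuous φ) (hφsupp : HasCompactSupport φ)
    (θ : ℝ) (hθ : θ ∈ Set.Ioo (0 : ℝ) 1) (δ : ℝ) (hδ : 0 < δ) :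
    ∃ C : ℝ, 0 < C ∧ ∀ f : Euc d × Euc d → ℝ, Measurable f → (∀ z, 0 ≤ f z) →
      ∀ r : ℝ, 1 ≤ r →
      (∫⁻ x : Euc d in {x : Euc d | r ≤ ‖x‖},
          ENNReal.ofReal ((∫ v : Euc d, φ v * f (x, v)) ^ (2 : ℕ)))
        ≤ ENNReal.ofReal (C * r ^ (-(δ * (1 - θ)))) *
          ((∫⁻ z : Euc d × Euc d, ENNReal.ofReal ((1 + ‖z.1‖ ^ δ) * f z))
            + ∫⁻ z : Euc d × Euc d, ENNReal.ofReal (f z ^ (1 + 1 / θ))) := by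
  obtain ⟨hθ0, hθ1⟩ := hθ
  have hθ1' : (0:ℝ) < 1 - θ := by linarith
  set p : ℝ := 1 + 1/θ with hp
  have hp1 : 1 < p := by
    have : 0 < 1/θ := by positivity
    simp only [hp]; linarith
  have hp0 : 0 < p := by linarith
  -- the support and the bound on φ
  set K : Set (Euc d) := tsupport φ with hKdef
  have hKc : IsCompact K := hφsupp
  have hKm : MeasurableSet K := (isClosed_tsupport φ).measurableSet
  have hKfin : volume K ≠ ⊤ := hKc.measure_lt_top.ne
  obtain ⟨A0, hA0⟩ := hφsupp.exists_bound_of_continuous hφcont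
  set A : ℝ := max A0 0 with hAdef
  have hA : ∀ v, |φ v| ≤ A := fun v => le_trans (by simpa using hA0 v) (le_max_left _ _)
  have hAnn : 0 ≤ A := le_max_right _ _
  -- the constant
  set B : ℝ≥0∞ := ENNReal.ofReal A ^ (2:ℕ) * (volume K) ^ (p/(1+θ) * θ) with hBdef
  have hBfin : B ≠ ⊤ := by
    apply ENNReal.mul_ne_top
    · exact ENNReal.pow_ne_top ENNReal.ofReal_ne_top
    · exact (ENNReal.rpow_lt_top_of_nonneg (by positivity) hKfin).ne
  refine ⟨B.toReal + 1, by positivity, ?_⟩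
  intro f hf hf0 r hr
  have hr0 : (0:ℝ) < r := lt_of_lt_of_le zero_lt_one hr
  set S : Set (Euc d) := {x : Euc d | r ≤ ‖x‖} with hSdef
  have hSm : MeasurableSet S := measurableSet_le measurable_const measurable_norm
  set F : Euc d × Euc d → ℝ≥0∞ := fun z => ENNReal.ofReal (f z) with hFdef
  have hF : Measurable F := ENNReal.measurable_ofReal.comp hf
  set h : Euc d → ℝ≥0∞ := fun x => ∫⁻ v in K, F (x, v) with hhdef
  have hh : Measurable h := by
    apply Measurable.lintegral_prod_right (f := fun x v => F (x, v))
    exact hF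
  set M : ℝ≥0∞ := ∫⁻ z : Euc d × Euc d, ENNReal.ofReal ((1 + ‖z.1‖ ^ δ) * f z) with hMdef
  set N : ℝ≥0∞ := ∫⁻ z : Euc d × Euc d, ENNReal.ofReal (f z ^ (1 + 1 / θ)) with hNdef
  -- Step 1 : pointwise bound of the velocity average
  have step1 : ∀ x : Euc d,
      ENNReal.ofReal ((∫ v : Euc d, φ v * f (x, v)) ^ (2:ℕ))
        ≤ (ENNReal.ofReal A * h x) ^ (2:ℕ) := by
    intro x
    set t : ℝ := ∫ v : Euc d, φ v * f (x, v) with htdef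
    have h1 : ENNReal.ofReal (t ^ (2:ℕ)) = ((‖t‖₊ : ℝ≥0∞)) ^ (2:ℕ) := by
      rw [← sq_abs, ENNReal.ofReal_pow (abs_nonneg t), ← Real.norm_eq_abs,
        ofReal_norm, enorm_eq_nnnorm]
    rw [h1]
    have h2 : (‖t‖₊ : ℝ≥0∞) ≤ ENNReal.ofReal A * h x := by
      refine le_trans (enorm_integral_le_lintegral_enorm _) ?_
      have h3 : ∀ v : Euc d, (‖φ v * f (x, v)‖₊ : ℝ≥0∞)
          ≤ ENNReal.ofReal A * K.indicator (fun v => F (x, v)) v := by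
        intro v
        by_cases hv : v ∈ K
        · rw [Set.indicator_of_mem hv]
          calc (‖φ v * f (x, v)‖₊ : ℝ≥0∞) = ENNReal.ofReal (|φ v| * f (x, v)) := by
                rw [← enorm_eq_nnnorm, ← ofReal_norm, Real.norm_eq_abs, abs_mul,
                  abs_of_nonneg (hf0 _)]
            _ ≤ ENNReal.ofReal (A * f (x, v)) :=
                ENNReal.ofReal_le_ofReal (mul_le_mul_of_nonneg_right (hA v) (hf0 _))
            _ = ENNReal.ofReal A * F (x, v) := ENNReal.ofReal_mul hAnn
        · rw [Set.indicator_of_notMem hv]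
          have : φ v = 0 := image_eq_zero_of_notMem_tsupport hv
          simp [this]
      calc (∫⁻ v, (‖φ v * f (x, v)‖₊ : ℝ≥0∞))
          ≤ ∫⁻ v, ENNReal.ofReal A * K.indicator (fun v => F (x, v)) v :=
            lintegral_mono h3
        _ = ENNReal.ofReal A * ∫⁻ v, K.indicator (fun v => F (x, v)) v := by
            rw [lintegral_const_mul']
            exact ENNReal.ofReal_ne_top
        _ = ENNReal.ofReal A * h x := by rw [lintegral_indicator hKm]
    exact pow_le_pow_left' h2 2
  -- Step 2 : Hölder in x
  have step2 : (∫⁻ x in S, h x ^ (2:ℕ))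
      ≤ (∫⁻ x in S, h x) ^ (1 - θ) * (∫⁻ x in S, h x ^ p) ^ θ := by
    have hcon : ((1-θ)⁻¹).HolderConjugate θ⁻¹ := by
      constructor
      · rw [inv_inv, inv_inv, inv_one]; ring
      · exact inv_pos.mpr hθ1'
      · exact inv_pos.mpr hθ0
    have hmeas1 : AEMeasurable (fun x => h x ^ (1-θ)) (volume.restrict S) :=
      (ENNReal.continuous_rpow_const.measurable.comp hh).aemeasurable
    have hmeas2 : AEMeasurable (fun x => h x ^ (1+θ)) (volume.restrict S) :=
      (ENNReal.continuous_rpow_const.measurable.comp hh).aemeasurable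
    calc (∫⁻ x in S, h x ^ (2:ℕ))
        = ∫⁻ x in S, ((fun x => h x ^ (1-θ)) * (fun x => h x ^ (1+θ))) x := by
          refine lintegral_congr fun x => ?_
          simp only [Pi.mul_apply]
          rw [← ENNReal.rpow_add_of_nonneg _ _ (by linarith) (by linarith),
            ← ENNReal.rpow_natCast]
          norm_num
      _ ≤ (∫⁻ x in S, ((fun x => h x ^ (1-θ)) x) ^ (1-θ)⁻¹) ^ (1/(1-θ)⁻¹) *
            (∫⁻ x in S, ((fun x => h x ^ (1+θ)) x) ^ θ⁻¹) ^ (1/θ⁻¹) :=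
          ENNReal.lintegral_mul_le_Lp_mul_Lq _ hcon hmeas1 hmeas2
      _ = (∫⁻ x in S, h x) ^ (1 - θ) * (∫⁻ x in S, h x ^ p) ^ θ := by
          rw [one_div, inv_inv, one_div, inv_inv]
          congr 1
          · congr 1
            refine lintegral_congr fun x => ?_
            rw [← ENNReal.rpow_mul, mul_inv_cancel₀ (by linarith)]
            exact ENNReal.rpow_one _
          · congr 1
            refine lintegral_congr fun x => ?_
            rw [← ENNReal.rpow_mul]
            congr 1
            rw [hp]
            field_simp
            ring
  -- Step 3 : the moment bound
  have step3 : (∫⁻ x in S, h x) ≤ ENNReal.ofReal (r ^ (-δ)) * M := by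
    have hptwise : ∀ x ∈ S, h x
        ≤ ENNReal.ofReal (r ^ (-δ)) * (ENNReal.ofReal (1 + ‖x‖ ^ δ) * h x) := by
      intro x hx
      have hx1 : r ≤ ‖x‖ := hx
      have hb : (1:ℝ) ≤ r ^ (-δ) * (1 + ‖x‖ ^ δ) := by
        have h1 : r ^ δ ≤ ‖x‖ ^ δ := Real.rpow_le_rpow (le_of_lt hr0) hx1 hδ.le
        have h2 : r ^ (-δ) * r ^ δ = 1 := by
          rw [← Real.rpow_add hr0]; simp
        calc (1:ℝ) = r ^ (-δ) * r ^ δ := h2.symm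
          _ ≤ r ^ (-δ) * (1 + ‖x‖ ^ δ) := by
              apply mul_le_mul_of_nonneg_left _ (Real.rpow_nonneg hr0.le _)
              have : (0:ℝ) ≤ 1 := zero_le_one
              linarith
      calc h x = 1 * h x := (one_mul _).symm
        _ ≤ (ENNReal.ofReal (r ^ (-δ)) * ENNReal.ofReal (1 + ‖x‖ ^ δ)) * h x := by
            apply mul_le_mul_left
            rw [← ENNReal.ofReal_mul (Real.rpow_nonneg hr0.le _), ← ENNReal.ofReal_one]
            exact ENNReal.ofReal_le_ofReal hb
        _ = ENNReal.ofReal (r ^ (-δ)) * (ENNReal.ofReal (1 + ‖x‖ ^ δ) * h x) := by ring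
    calc (∫⁻ x in S, h x)
        ≤ ∫⁻ x in S, ENNReal.ofReal (r ^ (-δ)) * (ENNReal.ofReal (1 + ‖x‖ ^ δ) * h x) :=
          setLIntegral_mono
            ((measurable_const.mul ((ENNReal.measurable_ofReal.comp
              (measurable_const.add
                ((Real.continuous_rpow_const hδ.le).measurable.comp measurable_norm))).mul hh)))
            hptwise
      _ = ENNReal.ofReal (r ^ (-δ)) * ∫⁻ x in S, ENNReal.ofReal (1 + ‖x‖ ^ δ) * h x := by
          rw [lintegral_const_mul']; exact ENNReal.ofReal_ne_top
      _ ≤ ENNReal.ofReal (r ^ (-δ)) * ∫⁻ x, ENNReal.ofReal (1 + ‖x‖ ^ δ) * h x := by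
          exact mul_le_mul_right (setLIntegral_le_lintegral _ _) _
      _ ≤ ENNReal.ofReal (r ^ (-δ)) * M := by
        apply mul_le_mul_right
        have hMeq : M = ∫⁻ x, ∫⁻ v, ENNReal.ofReal ((1 + ‖x‖ ^ δ) * f (x, v)) := by
          rw [hMdef, Measure.volume_eq_prod, lintegral_prod]
          apply Measurable.aemeasurable
          apply ENNReal.measurable_ofReal.comp
          apply Measurable.mul _ hf
          exact measurable_const.add
            ((Real.continuous_rpow_const hδ.le).measurable.comp (measurable_norm.comp measurable_fst))
        rw [hMeq]
        refine lintegral_mono fun x => ?_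
        calc ENNReal.ofReal (1 + ‖x‖ ^ δ) * h x
            = ∫⁻ v in K, ENNReal.ofReal (1 + ‖x‖ ^ δ) * F (x, v) := by
              rw [hhdef, lintegral_const_mul']; exact ENNReal.ofReal_ne_top
          _ ≤ ∫⁻ v, ENNReal.ofReal (1 + ‖x‖ ^ δ) * F (x, v) :=
              setLIntegral_le_lintegral _ _
          _ = ∫⁻ v, ENNReal.ofReal ((1 + ‖x‖ ^ δ) * f (x, v)) := by
              refine lintegral_congr fun v => ?_
              rw [ENNReal.ofReal_mul]
              positivity
  -- Step 4 : Hölder in v and the Lᵖ bound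
  have step4 : (∫⁻ x in S, h x ^ p) ≤ (volume K) ^ (p/(1+θ)) * N := by
    have hcon : (1+θ).HolderConjugate p := by
      have hθne : θ ≠ 0 := hθ0.ne'
      have h1ne : 1 + θ ≠ 0 := (by linarith : (0:ℝ) < 1 + θ).ne'
      constructor
      · rw [hp, inv_one]
        field_simp
        ring
      · linarith
      · exact hp0
    have hvh : ∀ x : Euc d, h x ^ p ≤ (volume K) ^ (p/(1+θ)) * ∫⁻ v in K, F (x, v) ^ p := by
      intro x
      have h1 : h x ≤ (volume K) ^ (1/(1+θ)) * (∫⁻ v in K, F (x, v) ^ p) ^ (1/p) := by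
        have := ENNReal.lintegral_mul_le_Lp_mul_Lq (volume.restrict K) hcon
          (f := fun _ => 1) (g := fun v => F (x, v)) aemeasurable_const
          ((hF.comp (measurable_prodMk_left)).aemeasurable)
        simp only [Pi.mul_apply, one_mul, ENNReal.one_rpow] at this
        refine le_trans this ?_
        rw [setLIntegral_one]
      calc h x ^ p ≤ ((volume K) ^ (1/(1+θ)) * (∫⁻ v in K, F (x, v) ^ p) ^ (1/p)) ^ p :=
            ENNReal.rpow_le_rpow h1 hp0.le
        _ = (volume K) ^ (p/(1+θ)) * ∫⁻ v in K, F (x, v) ^ p := by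
            rw [ENNReal.mul_rpow_of_nonneg _ _ hp0.le, ← ENNReal.rpow_mul,
              ← ENNReal.rpow_mul, one_div_mul_cancel hp0.ne', ENNReal.rpow_one]
            congr 1
            ring
    calc (∫⁻ x in S, h x ^ p)
        ≤ ∫⁻ x in S, (volume K) ^ (p/(1+θ)) * ∫⁻ v in K, F (x, v) ^ p :=
          lintegral_mono fun x => hvh x
      _ = (volume K) ^ (p/(1+θ)) * ∫⁻ x in S, ∫⁻ v in K, F (x, v) ^ p := by
          rw [lintegral_const_mul']
          exact (ENNReal.rpow_lt_top_of_nonneg (by positivity) hKfin).ne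
      _ ≤ (volume K) ^ (p/(1+θ)) * N := by
        apply mul_le_mul_right
        have hNeq : N = ∫⁻ x, ∫⁻ v, F (x, v) ^ p := by
          rw [hNdef, Measure.volume_eq_prod, lintegral_prod]
          · refine lintegral_congr fun x => lintegral_congr fun v => ?_
            rw [hFdef]
            exact (ENNReal.ofReal_rpow_of_nonneg (hf0 _) hp0.le).symm
          · exact (ENNReal.measurable_ofReal.comp
              ((Real.continuous_rpow_const hp0.le).measurable.comp hf)).aemeasurable
        rw [hNeq]
        refine le_trans (setLIntegral_le_lintegral _ _) (lintegral_mono fun x => ?_)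
        exact setLIntegral_le_lintegral _ _
  -- Combine everything
  have main : (∫⁻ x : Euc d in S, ENNReal.ofReal ((∫ v : Euc d, φ v * f (x, v)) ^ (2:ℕ)))
      ≤ B * (ENNReal.ofReal (r ^ (-δ)) ^ (1-θ) * (M ^ (1-θ) * N ^ θ)) := by
    calc (∫⁻ x in S, ENNReal.ofReal ((∫ v : Euc d, φ v * f (x, v)) ^ (2:ℕ)))
        ≤ ∫⁻ x in S, (ENNReal.ofReal A * h x) ^ (2:ℕ) := lintegral_mono fun x => step1 x
      _ = ENNReal.ofReal A ^ (2:ℕ) * ∫⁻ x in S, h x ^ (2:ℕ) := by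
          rw [← lintegral_const_mul']
          · refine lintegral_congr fun x => ?_; ring
          · exact ENNReal.pow_ne_top ENNReal.ofReal_ne_top
      _ ≤ ENNReal.ofReal A ^ (2:ℕ) *
            ((∫⁻ x in S, h x) ^ (1 - θ) * (∫⁻ x in S, h x ^ p) ^ θ) :=
          mul_le_mul_right step2 _
      _ ≤ ENNReal.ofReal A ^ (2:ℕ) *
            ((ENNReal.ofReal (r ^ (-δ)) * M) ^ (1 - θ) *
              ((volume K) ^ (p/(1+θ)) * N) ^ θ) := by
          apply mul_le_mul_right
          exact mul_le_mul' (ENNReal.rpow_le_rpow step3 hθ1'.le)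
            (ENNReal.rpow_le_rpow step4 hθ0.le)
      _ = B * (ENNReal.ofReal (r ^ (-δ)) ^ (1-θ) * (M ^ (1-θ) * N ^ θ)) := by
          rw [ENNReal.mul_rpow_of_nonneg _ _ hθ1'.le, ENNReal.mul_rpow_of_nonneg _ _ hθ0.le,
            ← ENNReal.rpow_mul, hBdef]
          ring
  refine le_trans main ?_
  have hMN : M ^ (1-θ) * N ^ θ ≤ M + N := by
    calc M ^ (1-θ) * N ^ θ ≤ (M+N) ^ (1-θ) * (M+N) ^ θ :=
        mul_le_mul' (ENNReal.rpow_le_rpow le_self_add hθ1'.le)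
          (ENNReal.rpow_le_rpow le_add_self hθ0.le)
      _ = (M+N) ^ ((1-θ) + θ) :=
        (ENNReal.rpow_add_of_nonneg _ _ hθ1'.le hθ0.le).symm
      _ = M + N := by rw [sub_add_cancel, ENNReal.rpow_one]
  have hrpow : ENNReal.ofReal (r ^ (-δ)) ^ (1-θ) = ENNReal.ofReal (r ^ (-(δ * (1-θ)))) := by
    rw [ENNReal.ofReal_rpow_of_nonneg (Real.rpow_nonneg hr0.le _) hθ1'.le,
      ← Real.rpow_mul hr0.le, neg_mul]
  have hBC : B ≤ ENNReal.ofReal (B.toReal + 1) := by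
    calc B = ENNReal.ofReal B.toReal := (ENNReal.ofReal_toReal hBfin).symm
      _ ≤ ENNReal.ofReal (B.toReal + 1) := ENNReal.ofReal_le_ofReal (by linarith)
  calc B * (ENNReal.ofReal (r ^ (-δ)) ^ (1-θ) * (M ^ (1-θ) * N ^ θ))
      ≤ ENNReal.ofReal (B.toReal + 1) * (ENNReal.ofReal (r ^ (-(δ * (1-θ)))) * (M + N)) := by
        rw [hrpow]
        exact mul_le_mul' hBC (mul_le_mul_right hMN _)
    _ = ENNReal.ofReal ((B.toReal + 1) * r ^ (-(δ * (1-θ)))) * (M + N) := by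
        rw [ENNReal.ofReal_mul (by positivity), mul_assoc]
end

section
/- Let d ≥ 1, let γ > 0, m > d, τ ∈ (0,1), set p = 1 + 1/τ and let k ≥ (2 + 2γ + m)/(1 − τ). Then there exists a constant C, depending only on d, γ, m, τ, such that for every measurable f : ℝ^d × ℝ^d → [0,∞) and every R ≥ 1, ∫_{ℝ^d} ( ∫_{|v| ≥ R} |v| f(x,v) dv )² dx ≤ C R^{−2γ} ( ∫_{ℝ^{2d}} (1 + |v|)^k f(x,v) dx dv + ∫_{ℝ^{2d}} f(x,v)^p dx dv ). -/
open MeasureTheory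
open scoped ENNReal

lemma ofReal_int_le {α : Type*} [MeasurableSpace α] (μ : Measure α)
    (g : α → ℝ) (hg : ∀ a, 0 ≤ g a) :
    ENNReal.ofReal (∫ a, g a ∂μ) ≤ ∫⁻ a, ENNReal.ofReal (g a) ∂μ := by
  by_cases h : Integrable g μ
  · rw [ofReal_integral_eq_lintegral_ofReal h (ae_of_all _ hg)]
  · rw [integral_undef h]; simp

lemma ptwise {A k τ : ℝ} (hA0 : 0 < A) (hτ0 : 0 < τ) (hτ1 : τ < 1)
    (hk : A / (1 - τ) ≤ k) {u t : ℝ} (hu : 1 ≤ u) (ht : 0 ≤ t) :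
    u ^ A * t ^ 2 ≤ u ^ k * t + t ^ (1 + 1 / τ) := by
  have hu0 : (0:ℝ) < u := lt_of_lt_of_le one_pos hu
  set p : ℝ := 1 + 1/τ with hp
  have h1τ : 0 < 1 - τ := by linarith
  have hp2 : 0 < p - 2 := by
    have : 1 < 1/τ := by rw [lt_div_iff₀ hτ0]; linarith
    simp only [hp]; linarith
  set β : ℝ := A * τ / (1 - τ) with hβ
  have hβ0 : 0 < β := by positivity
  have hβp : β * (p - 2) = A := by
    have h' : p - 2 = (1 - τ)/τ := by rw [hp]; field_simp; ring
    rw [h', hβ]; field_simp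
  have hAβk : A + β ≤ k := by
    have : A + β = A / (1 - τ) := by rw [hβ]; field_simp; ring
    linarith [this ▸ hk]
  rcases le_or_gt t (u ^ β) with h | h
  · have h1 : u ^ A * t ^ 2 ≤ u ^ A * (u ^ β * t) := by
      have ht2 : t ^ 2 ≤ u ^ β * t := by
        rw [sq]; exact mul_le_mul_of_nonneg_right h ht
      exact mul_le_mul_of_nonneg_left ht2 (Real.rpow_nonneg hu0.le _)
    have h2 : u ^ A * (u ^ β * t) = u ^ (A + β) * t := by
      rw [← mul_assoc, ← Real.rpow_add hu0]
    have h3 : u ^ (A + β) ≤ u ^ k := Real.rpow_le_rpow_of_exponent_le hu hAβk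
    have h4 : u ^ (A + β) * t ≤ u ^ k * t := mul_le_mul_of_nonneg_right h3 ht
    have h5 : (0:ℝ) ≤ t ^ p := Real.rpow_nonneg ht _
    calc u ^ A * t ^ 2 ≤ u ^ (A + β) * t := by rw [← h2]; exact h1
      _ ≤ u ^ k * t := h4
      _ ≤ u ^ k * t + t ^ p := le_add_of_nonneg_right h5
  · have ht0 : 0 < t := (Real.rpow_pos_of_pos hu0 _).trans h
    have h2 : u ^ A ≤ t ^ (p - 2) := by
      have := Real.rpow_le_rpow (Real.rpow_nonneg hu0.le _) h.le hp2.le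
      rwa [← Real.rpow_mul hu0.le, hβp] at this
    have h3 : u ^ A * t ^ 2 ≤ t ^ (p - 2) * t ^ 2 :=
      mul_le_mul_of_nonneg_right h2 (pow_nonneg ht 2)
    have h4 : t ^ (p - 2) * t ^ 2 = t ^ p := by
      rw [← Real.rpow_natCast t 2, ← Real.rpow_add ht0]
      norm_num
    have h5 : (0:ℝ) ≤ u ^ k * t := mul_nonneg (Real.rpow_nonneg hu0.le _) ht
    calc u ^ A * t ^ 2 ≤ t ^ p := h4 ▸ h3
      _ ≤ u ^ k * t + t ^ p := le_add_of_nonneg_left h5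

lemma sq_halves (a : ℝ≥0∞) : (a ^ ((1:ℝ)/2)) ^ (2:ℕ) = a := by
  rw [← ENNReal.rpow_natCast (a ^ ((1:ℝ)/2)) 2, ← ENNReal.rpow_mul]
  norm_num

/-- velocity tail estimate:
`∫_x ( ∫_{|v| ≥ R} |v| f(x,v) dv )² dx ≤ C R^{−2γ} ( ∫ (1+|v|)^k f dz + ∫ f^p dz )`
with `p = 1 + 1/τ`, `k ≥ (2+2γ+m)/(1−τ)` and `C = C(d, γ, m, τ)`. -/
theorem stmt15 (d : ℕ) (hd : 1 ≤ d) (γ m τ : ℝ) (hγ : 0 < γ) (hm : (d : ℝ) < m)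
    (hτ : τ ∈ Set.Ioo (0 : ℝ) 1) (k : ℝ) (hk : (2 + 2 * γ + m) / (1 - τ) ≤ k) :
    ∃ C : ℝ, 0 < C ∧ ∀ f : Euc d × Euc d → ℝ, Measurable f → (∀ z, 0 ≤ f z) →
      ∀ R : ℝ, 1 ≤ R →
      (∫⁻ x : Euc d, ENNReal.ofReal
          ((∫ v : Euc d in {v : Euc d | R ≤ ‖v‖}, ‖v‖ * f (x, v)) ^ (2 : ℕ)))
        ≤ ENNReal.ofReal (C * R ^ (-(2 * γ))) *
          ((∫⁻ z : Euc d × Euc d, ENNReal.ofReal ((1 + ‖z.2‖) ^ k * f z))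
            + ∫⁻ z : Euc d × Euc d, ENNReal.ofReal (f z ^ (1 + 1 / τ))) := by
  obtain ⟨hτ0, hτ1⟩ := hτ
  have hd0 : (0:ℝ) ≤ (d:ℝ) := Nat.cast_nonneg d
  have hm0 : (0:ℝ) < m := lt_of_le_of_lt hd0 hm
  set A : ℝ := 2 + 2*γ + m with hAdef
  have hA0 : 0 < A := by simp only [hAdef]; linarith
  -- the constant
  have hfinrank : (Module.finrank ℝ (Euc d) : ℝ) < m := by
    have : Module.finrank ℝ (Euc d) = d := finrank_euclideanSpace_fin
    rw [this]; exact hm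
  have hint : Integrable (fun v : Euc d => (1 + ‖v‖) ^ (-m)) :=
    integrable_one_add_norm hfinrank
  set Cm : ℝ≥0∞ := ∫⁻ v : Euc d, ENNReal.ofReal ((1 + ‖v‖) ^ (-m)) with hCmdef
  have hCmlt : Cm < ∞ := hint.lintegral_lt_top
  refine ⟨Cm.toReal + 1, by positivity, ?_⟩
  intro f hfm hf0 R hR
  have hR0 : (0:ℝ) < R := lt_of_lt_of_le one_pos hR
  set S : Set (Euc d) := {v : Euc d | R ≤ ‖v‖} with hSdef
  have hS : MeasurableSet S := measurableSet_le measurable_const measurable_norm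
  -- some frequently used facts
  have hbase : ∀ v : Euc d, (0:ℝ) < 1 + ‖v‖ := fun v => by positivity
  have hbase1 : ∀ v : Euc d, (1:ℝ) ≤ 1 + ‖v‖ := fun v => by
    simpa using norm_nonneg v
  -- abbreviations
  set J : Euc d → ℝ≥0∞ := fun x => ∫⁻ v : Euc d,
    ENNReal.ofReal ((1 + ‖v‖) ^ (1 + γ) * f (x, v)) with hJdef
  set K : Euc d → ℝ≥0∞ := fun x => ∫⁻ v : Euc d,
    ENNReal.ofReal ((1 + ‖v‖) ^ A * f (x, v) ^ 2) with hKdef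
  -- Step 1: pointwise-in-x bound via truncation and Cauchy–Schwarz
  have hxbound : ∀ x : Euc d,
      ENNReal.ofReal ((∫ v : Euc d in S, ‖v‖ * f (x, v)) ^ (2:ℕ))
        ≤ (ENNReal.ofReal (R ^ (-γ))) ^ (2:ℕ) * (Cm * K x) := by
    intro x
    have hfx : Measurable (fun v : Euc d => f (x, v)) := hfm.comp measurable_prodMk_left
    have hInn : 0 ≤ ∫ v : Euc d in S, ‖v‖ * f (x, v) :=
      setIntegral_nonneg hS fun v _ => mul_nonneg (norm_nonneg v) (hf0 _)
    -- step (a): pass to lintegral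
    have ha : ENNReal.ofReal ((∫ v : Euc d in S, ‖v‖ * f (x, v)) ^ (2:ℕ))
        = (ENNReal.ofReal (∫ v : Euc d in S, ‖v‖ * f (x, v))) ^ (2:ℕ) :=
      ENNReal.ofReal_pow hInn 2
    have hb : ENNReal.ofReal (∫ v : Euc d in S, ‖v‖ * f (x, v))
        ≤ ∫⁻ v in S, ENNReal.ofReal (‖v‖ * f (x, v)) :=
      ofReal_int_le _ _ fun v => mul_nonneg (norm_nonneg v) (hf0 _)
    -- step (b): kill the tail with R^{-γ}
    have hc : (∫⁻ v in S, ENNReal.ofReal (‖v‖ * f (x, v)))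
        ≤ ENNReal.ofReal (R ^ (-γ)) * J x := by
      have hmono : ∀ v ∈ S, ENNReal.ofReal (‖v‖ * f (x, v))
          ≤ ENNReal.ofReal (R ^ (-γ)) * ENNReal.ofReal ((1 + ‖v‖) ^ (1 + γ) * f (x, v)) := by
        intro v hv
        have hvR : R ≤ ‖v‖ := hv
        have hnorm : ‖v‖ ≤ R ^ (-γ) * (1 + ‖v‖) ^ (1 + γ) := by
          have e1 : (1 + ‖v‖) ^ (1 + γ) = (1 + ‖v‖) * (1 + ‖v‖) ^ γ := by
            rw [Real.rpow_add (hbase v), Real.rpow_one]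
          have e2 : R ^ γ ≤ (1 + ‖v‖) ^ γ :=
            Real.rpow_le_rpow hR0.le (by linarith) hγ.le
          have e3 : ‖v‖ * R ^ γ ≤ (1 + ‖v‖) * (1 + ‖v‖) ^ γ :=
            mul_le_mul (by linarith) e2 (Real.rpow_nonneg hR0.le _) (by linarith [hbase v])
          have e4 : R ^ (-γ) * (‖v‖ * R ^ γ) = ‖v‖ := by
            rw [mul_comm ‖v‖ (R ^ γ), ← mul_assoc, ← Real.rpow_add hR0]
            simp
          calc ‖v‖ = R ^ (-γ) * (‖v‖ * R ^ γ) := e4.symm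
            _ ≤ R ^ (-γ) * ((1 + ‖v‖) * (1 + ‖v‖) ^ γ) :=
                mul_le_mul_of_nonneg_left e3 (Real.rpow_nonneg hR0.le _)
            _ = R ^ (-γ) * (1 + ‖v‖) ^ (1 + γ) := by rw [e1]
        have hreal : ‖v‖ * f (x, v) ≤ R ^ (-γ) * ((1 + ‖v‖) ^ (1 + γ) * f (x, v)) := by
          have := mul_le_mul_of_nonneg_right hnorm (hf0 (x, v))
          calc ‖v‖ * f (x, v) ≤ R ^ (-γ) * (1 + ‖v‖) ^ (1 + γ) * f (x, v) := this
            _ = R ^ (-γ) * ((1 + ‖v‖) ^ (1 + γ) * f (x, v)) := by ring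
        calc ENNReal.ofReal (‖v‖ * f (x, v))
            ≤ ENNReal.ofReal (R ^ (-γ) * ((1 + ‖v‖) ^ (1 + γ) * f (x, v))) :=
              ENNReal.ofReal_le_ofReal hreal
          _ = ENNReal.ofReal (R ^ (-γ)) * ENNReal.ofReal ((1 + ‖v‖) ^ (1 + γ) * f (x, v)) :=
              ENNReal.ofReal_mul (Real.rpow_nonneg hR0.le _)
      calc (∫⁻ v in S, ENNReal.ofReal (‖v‖ * f (x, v)))
          ≤ ∫⁻ v in S, ENNReal.ofReal (R ^ (-γ)) *
              ENNReal.ofReal ((1 + ‖v‖) ^ (1 + γ) * f (x, v)) :=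
            setLIntegral_mono' hS hmono
        _ ≤ ∫⁻ v : Euc d, ENNReal.ofReal (R ^ (-γ)) *
              ENNReal.ofReal ((1 + ‖v‖) ^ (1 + γ) * f (x, v)) :=
            setLIntegral_le_lintegral _ _
        _ = ENNReal.ofReal (R ^ (-γ)) * J x :=
            lintegral_const_mul' _ _ ENNReal.ofReal_ne_top
    -- step (c): Cauchy–Schwarz
    have hd : J x ^ (2:ℕ) ≤ Cm * K x := by
      set g₁ : Euc d → ℝ≥0∞ := fun v => ENNReal.ofReal ((1 + ‖v‖) ^ (-(m/2))) with hg₁def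
      set g₂ : Euc d → ℝ≥0∞ := fun v =>
        ENNReal.ofReal ((1 + ‖v‖) ^ (m/2 + 1 + γ) * f (x, v)) with hg₂def
      have hg₁m : Measurable g₁ := by
        apply Measurable.ennreal_ofReal
        exact ((continuous_const.add continuous_norm).rpow_const
          fun v => Or.inl (hbase v).ne').measurable
      have hg₂m : Measurable g₂ := by
        apply Measurable.ennreal_ofReal
        exact (((continuous_const.add continuous_norm).rpow_const
          fun v => Or.inl (hbase v).ne').measurable).mul hfx
      have hJeq : J x = ∫⁻ v, (g₁ * g₂) v := by
        apply lintegral_congr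
        intro v
        simp only [Pi.mul_apply, hg₁def, hg₂def]
        rw [← ENNReal.ofReal_mul (Real.rpow_nonneg (hbase v).le _)]
        congr 1
        rw [← mul_assoc, ← Real.rpow_add (hbase v)]
        ring_nf
      have hHolder := ENNReal.lintegral_mul_le_Lp_mul_Lq volume
        (Real.HolderConjugate.two_two : Real.HolderConjugate 2 2)
        hg₁m.aemeasurable hg₂m.aemeasurable
      have hInt1 : (∫⁻ v, g₁ v ^ (2:ℝ)) = Cm := by
        apply lintegral_congr
        intro v
        simp only [hg₁def]
        rw [ENNReal.ofReal_rpow_of_nonneg (Real.rpow_nonneg (hbase v).le _) (by norm_num)]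
        congr 1
        rw [← Real.rpow_mul (hbase v).le]
        congr 1
        ring
      have hInt2 : (∫⁻ v, g₂ v ^ (2:ℝ)) = K x := by
        apply lintegral_congr
        intro v
        simp only [hg₂def, hKdef]
        rw [ENNReal.ofReal_rpow_of_nonneg
          (mul_nonneg (Real.rpow_nonneg (hbase v).le _) (hf0 _)) (by norm_num)]
        congr 1
        have ht2 : (f (x, v)) ^ (2:ℝ) = (f (x, v)) ^ (2:ℕ) := by
          rw [← Real.rpow_natCast (f (x, v)) 2]; norm_num
        rw [Real.mul_rpow (Real.rpow_nonneg (hbase v).le _) (hf0 _),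
          ← Real.rpow_mul (hbase v).le, ht2]
        congr 2
        rw [hAdef]; ring
      calc J x ^ (2:ℕ)
          = (∫⁻ v, (g₁ * g₂) v) ^ (2:ℕ) := by rw [hJeq]
        _ ≤ ((∫⁻ v, g₁ v ^ (2:ℝ)) ^ ((1:ℝ)/2) * (∫⁻ v, g₂ v ^ (2:ℝ)) ^ ((1:ℝ)/2)) ^ (2:ℕ) :=
            pow_le_pow_left₀ zero_le hHolder 2
        _ = (∫⁻ v, g₁ v ^ (2:ℝ)) * (∫⁻ v, g₂ v ^ (2:ℝ)) := by
            rw [mul_pow, sq_halves, sq_halves]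
        _ = Cm * K x := by rw [hInt1, hInt2]
    -- combine
    calc ENNReal.ofReal ((∫ v : Euc d in S, ‖v‖ * f (x, v)) ^ (2:ℕ))
        = (ENNReal.ofReal (∫ v : Euc d in S, ‖v‖ * f (x, v))) ^ (2:ℕ) := ha
      _ ≤ (∫⁻ v in S, ENNReal.ofReal (‖v‖ * f (x, v))) ^ (2:ℕ) :=
          pow_le_pow_left₀ zero_le hb 2
      _ ≤ (ENNReal.ofReal (R ^ (-γ)) * J x) ^ (2:ℕ) :=
          pow_le_pow_left₀ zero_le hc 2
      _ = (ENNReal.ofReal (R ^ (-γ))) ^ (2:ℕ) * J x ^ (2:ℕ) := mul_pow _ _ 2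
      _ ≤ (ENNReal.ofReal (R ^ (-γ))) ^ (2:ℕ) * (Cm * K x) :=
          mul_le_mul_right hd _
  -- Step 2: integrate in x, Tonelli, and the pointwise interpolation inequality
  set c : ℝ≥0∞ := (ENNReal.ofReal (R ^ (-γ))) ^ (2:ℕ) * Cm with hcdef
  have hcne : c ≠ ∞ := by
    exact ENNReal.mul_ne_top (by simp [ENNReal.pow_ne_top ENNReal.ofReal_ne_top]) hCmlt.ne
  have hKmeas : Measurable (fun z : Euc d × Euc d =>
      ENNReal.ofReal ((1 + ‖z.2‖) ^ A * f z ^ 2)) := by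
    apply Measurable.ennreal_ofReal
    refine Measurable.mul ?_ (hfm.pow_const 2)
    exact (((continuous_const.add continuous_norm).rpow_const
      fun v => Or.inl (hbase v).ne').measurable).comp measurable_snd
  have hTonelli : (∫⁻ x : Euc d, K x)
      = ∫⁻ z : Euc d × Euc d, ENNReal.ofReal ((1 + ‖z.2‖) ^ A * f z ^ 2) := by
    rw [MeasureTheory.Measure.volume_eq_prod, lintegral_prod _ hKmeas.aemeasurable]
  have hptwise : (∫⁻ z : Euc d × Euc d, ENNReal.ofReal ((1 + ‖z.2‖) ^ A * f z ^ 2))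
      ≤ (∫⁻ z : Euc d × Euc d, ENNReal.ofReal ((1 + ‖z.2‖) ^ k * f z))
        + ∫⁻ z : Euc d × Euc d, ENNReal.ofReal (f z ^ (1 + 1 / τ)) := by
    have hmeas1 : Measurable (fun z : Euc d × Euc d =>
        ENNReal.ofReal ((1 + ‖z.2‖) ^ k * f z)) := by
      apply Measurable.ennreal_ofReal
      refine Measurable.mul ?_ hfm
      exact (((continuous_const.add continuous_norm).rpow_const
        fun v => Or.inl (hbase v).ne').measurable).comp measurable_snd
    calc (∫⁻ z : Euc d × Euc d, ENNReal.ofReal ((1 + ‖z.2‖) ^ A * f z ^ 2))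
        ≤ ∫⁻ z : Euc d × Euc d, (ENNReal.ofReal ((1 + ‖z.2‖) ^ k * f z)
            + ENNReal.ofReal (f z ^ (1 + 1 / τ))) := by
          apply lintegral_mono
          intro z
          dsimp only
          rw [← ENNReal.ofReal_add (mul_nonneg (Real.rpow_nonneg (hbase z.2).le _) (hf0 z))
            (Real.rpow_nonneg (hf0 z) _)]
          exact ENNReal.ofReal_le_ofReal
            (ptwise hA0 hτ0 hτ1 hk (hbase1 z.2) (hf0 z))
      _ = (∫⁻ z : Euc d × Euc d, ENNReal.ofReal ((1 + ‖z.2‖) ^ k * f z))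
            + ∫⁻ z : Euc d × Euc d, ENNReal.ofReal (f z ^ (1 + 1 / τ)) :=
          lintegral_add_left hmeas1 _
  -- Step 3: identify the constant
  have hconst : c ≤ ENNReal.ofReal ((Cm.toReal + 1) * R ^ (-(2 * γ))) := by
    have e1 : (ENNReal.ofReal (R ^ (-γ))) ^ (2:ℕ) = ENNReal.ofReal (R ^ (-(2*γ))) := by
      rw [← ENNReal.ofReal_pow (Real.rpow_nonneg hR0.le _) 2]
      congr 1
      rw [← Real.rpow_natCast (R ^ (-γ)) 2, ← Real.rpow_mul hR0.le]
      congr 1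
      push_cast
      ring
    have e2 : Cm ≤ ENNReal.ofReal (Cm.toReal + 1) := by
      calc Cm = ENNReal.ofReal Cm.toReal := (ENNReal.ofReal_toReal hCmlt.ne).symm
        _ ≤ ENNReal.ofReal (Cm.toReal + 1) := ENNReal.ofReal_le_ofReal (by linarith)
    calc c = ENNReal.ofReal (R ^ (-(2*γ))) * Cm := by rw [hcdef, e1]
      _ ≤ ENNReal.ofReal (R ^ (-(2*γ))) * ENNReal.ofReal (Cm.toReal + 1) :=
          mul_le_mul_right e2 _
      _ = ENNReal.ofReal ((Cm.toReal + 1) * R ^ (-(2 * γ))) := by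
          rw [← ENNReal.ofReal_mul (Real.rpow_nonneg hR0.le _)]
          rw [mul_comm]
  -- put everything together
  calc (∫⁻ x : Euc d, ENNReal.ofReal ((∫ v : Euc d in S, ‖v‖ * f (x, v)) ^ (2:ℕ)))
      ≤ ∫⁻ x : Euc d, c * K x := by
        apply lintegral_mono
        intro x
        calc ENNReal.ofReal ((∫ v : Euc d in S, ‖v‖ * f (x, v)) ^ (2:ℕ))
            ≤ (ENNReal.ofReal (R ^ (-γ))) ^ (2:ℕ) * (Cm * K x) := hxbound x
          _ = c * K x := by rw [hcdef]; ring
    _ = c * ∫⁻ x : Euc d, K x := lintegral_const_mul' _ _ hcne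
    _ ≤ ENNReal.ofReal ((Cm.toReal + 1) * R ^ (-(2 * γ))) *
          ((∫⁻ z : Euc d × Euc d, ENNReal.ofReal ((1 + ‖z.2‖) ^ k * f z))
            + ∫⁻ z : Euc d × Euc d, ENNReal.ofReal (f z ^ (1 + 1 / τ))) := by
        apply mul_le_mul' hconst
        rw [hTonelli]
        exact hptwise
end

section
/- Let T > 0 and λ > 0, and let h : [0,T] × [0,∞) → ℂ be measurable with ∫₀^T ∫₀^∞ |h(s,u)|² du ds < ∞. Then ∫₀^T | λ ∫₀^t e^{−λ(t−s)} h(s, t−s) ds |² dt ≤ λ ∫₀^T ∫₀^∞ |h(s,u)|² du ds. -/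
open MeasureTheory
open scoped ENNReal

/-- the exponential-kernel estimate used to bound `J₂(ξ)` in the
stochastic averaging lemma:
`∫₀^T | λ ∫₀^t e^{−λ(t−s)} h(s, t−s) ds |² dt ≤ λ ∫₀^T ∫₀^∞ |h(s,u)|² du ds`. -/
theorem stmt17 (T lam : ℝ) (hT : 0 < T) (hlam : 0 < lam)
    (h : ℝ → ℝ → ℂ) (hmeas : Measurable (Function.uncurry h))
    (hint : (∫⁻ s in Set.Ioc (0 : ℝ) T,
        ∫⁻ u in Set.Ioi (0 : ℝ), ENNReal.ofReal (‖h s u‖ ^ (2 : ℕ))) < ⊤) :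
    (∫⁻ t in Set.Ioc (0 : ℝ) T, ENNReal.ofReal
        (‖lam • ∫ s in Set.Ioc (0 : ℝ) t,
            Real.exp (-(lam * (t - s))) • h s (t - s)‖ ^ (2 : ℕ)))
      ≤ ENNReal.ofReal lam *
          ∫⁻ s in Set.Ioc (0 : ℝ) T,
            ∫⁻ u in Set.Ioi (0 : ℝ), ENNReal.ofReal (‖h s u‖ ^ (2 : ℕ)) := by
  have hconj : Real.HolderConjugate 2 2 := Real.HolderConjugate.two_two
  set φ : ℝ → ℝ → ℝ≥0∞ := fun t s =>
    ENNReal.ofReal (Real.exp (-(lam * (t - s)))) *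
      ENNReal.ofReal (‖h s (t - s)‖ ^ (2 : ℕ)) with hφ
  -- measurability of φ as a function of the pair
  have hhm : Measurable fun p : ℝ × ℝ => h p.2 (p.1 - p.2) :=
    hmeas.comp (measurable_snd.prodMk (measurable_fst.sub measurable_snd))
  have hφm : Measurable fun p : ℝ × ℝ => φ p.1 p.2 := by
    show Measurable fun p : ℝ × ℝ => ENNReal.ofReal (Real.exp (-(lam * (p.1 - p.2)))) *
      ENNReal.ofReal (‖h p.2 (p.1 - p.2)‖ ^ (2 : ℕ))
    refine Measurable.mul (f := fun p : ℝ × ℝ => ENNReal.ofReal (Real.exp (-(lam * (p.1 - p.2)))))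
      (g := fun p : ℝ × ℝ => ENNReal.ofReal (‖h p.2 (p.1 - p.2)‖ ^ (2 : ℕ))) ?_ ?_
    · exact (Real.measurable_exp.comp
        ((measurable_const.mul (measurable_fst.sub measurable_snd)).neg)).ennreal_ofReal
    · exact (hhm.norm.pow_const 2).ennreal_ofReal
  -- helper : squaring the Hölder bound
  have sq_eq : ∀ X Y : ℝ≥0∞, (X ^ (1 / (2:ℝ)) * Y ^ (1 / (2:ℝ))) ^ (2:ℕ) = X * Y := by
    intro X Y
    rw [mul_pow, ← ENNReal.rpow_natCast (X ^ _) 2, ← ENNReal.rpow_natCast (Y ^ _) 2,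
      ← ENNReal.rpow_mul, ← ENNReal.rpow_mul]
    norm_num
  -- pointwise bound in t
  have key : ∀ t ∈ Set.Ioc (0:ℝ) T,
      ENNReal.ofReal (‖lam • ∫ s in Set.Ioc (0 : ℝ) t,
            Real.exp (-(lam * (t - s))) • h s (t - s)‖ ^ (2:ℕ))
        ≤ ENNReal.ofReal lam * ∫⁻ s in Set.Ioc (0:ℝ) t, φ t s := by
    intro t ht
    set I := ∫ s in Set.Ioc (0:ℝ) t, Real.exp (-(lam * (t - s))) • h s (t - s) with hI
    set F : ℝ → ℝ≥0∞ := fun s => ENNReal.ofReal (Real.exp (-(lam * (t - s)) / 2)) with hF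
    set G : ℝ → ℝ≥0∞ := fun s =>
      ENNReal.ofReal (Real.exp (-(lam * (t - s)) / 2) * ‖h s (t - s)‖) with hG
    have hFm : Measurable F := by
      apply Measurable.ennreal_ofReal
      exact Real.measurable_exp.comp (((measurable_const.mul
        (measurable_const.sub measurable_id)).neg).div_const 2)
    have hGm : Measurable G := by
      apply Measurable.ennreal_ofReal
      apply Measurable.mul
      · exact Real.measurable_exp.comp (((measurable_const.mul
          (measurable_const.sub measurable_id)).neg).div_const 2)
      · exact (hmeas.comp (measurable_id.prodMk
          (measurable_const.sub measurable_id))).norm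
    have h1 : ENNReal.ofReal (‖lam • I‖ ^ (2:ℕ))
        = ENNReal.ofReal lam ^ (2:ℕ) * ENNReal.ofReal ‖I‖ ^ (2:ℕ) := by
      rw [norm_smul, Real.norm_eq_abs, abs_of_pos hlam, mul_pow,
        ENNReal.ofReal_mul (by positivity), ENNReal.ofReal_pow hlam.le,
        ENNReal.ofReal_pow (norm_nonneg _)]
    -- bound the norm of the integral by the lintegral of F * G
    have h2 : ENNReal.ofReal ‖I‖ ≤ ∫⁻ s in Set.Ioc (0:ℝ) t, (F * G) s := by
      rw [ofReal_norm]
      refine (enorm_integral_le_lintegral_enorm _).trans_eq ?_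
      refine lintegral_congr fun s => ?_
      rw [← ofReal_norm, norm_smul, Real.norm_eq_abs,
        abs_of_pos (Real.exp_pos _)]
      show ENNReal.ofReal _ = F s * G s
      rw [hF, hG, ← ENNReal.ofReal_mul (Real.exp_pos _).le, ← mul_assoc, ← Real.exp_add]
      congr 2
      ring
    have h3 := ENNReal.lintegral_mul_le_Lp_mul_Lq (volume.restrict (Set.Ioc (0:ℝ) t))
      hconj hFm.aemeasurable hGm.aemeasurable
    -- compute/bound the F-part
    have hFsq : ∀ s : ℝ, F s ^ (2:ℝ) = ENNReal.ofReal (Real.exp (-(lam * (t - s)))) := by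
      intro s
      show ENNReal.ofReal (Real.exp (-(lam * (t - s)) / 2)) ^ (2:ℝ) = _
      rw [ENNReal.ofReal_rpow_of_nonneg (Real.exp_pos _).le (by norm_num : (0:ℝ) ≤ 2)]
      congr 1
      rw [show (2:ℝ) = ((2:ℕ):ℝ) by norm_num, Real.rpow_natCast, pow_two, ← Real.exp_add]
      congr 1
      ring
    have hA : (∫⁻ s in Set.Ioc (0:ℝ) t, F s ^ (2:ℝ)) ≤ ENNReal.ofReal (1 / lam) := by
      simp only [hFsq]
      have hcont : Continuous fun s : ℝ => Real.exp (-(lam * (t - s))) := by continuity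
      have hInt : IntegrableOn (fun s : ℝ => Real.exp (-(lam * (t - s))))
          (Set.Ioc (0:ℝ) t) volume := hcont.integrableOn_Ioc
      rw [← ofReal_integral_eq_lintegral_ofReal hInt
        (Filter.Eventually.of_forall fun s => (Real.exp_pos _).le)]
      apply ENNReal.ofReal_le_ofReal
      have hval : ∫ s in Set.Ioc (0:ℝ) t, Real.exp (-(lam * (t - s)))
          = (1 - Real.exp (-(lam * t))) / lam := by
        rw [← intervalIntegral.integral_of_le ht.1.le]
        have e1 := _root_.intervalIntegral.integral_comp_sub_left (a := (0:ℝ)) (b := t)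
          (fun u => Real.exp (-(lam * u))) t
        simp only [sub_self, sub_zero] at e1
        rw [e1]
        have e2 : ∀ u : ℝ, Real.exp (-(lam * u)) = Real.exp (-lam * u) := by
          intro u; congr 1; ring
        simp only [e2]
        rw [_root_.intervalIntegral.integral_comp_mul_left Real.exp
          (neg_ne_zero.2 hlam.ne')]
        rw [mul_zero]
        have e3 : (∫ x in (0:ℝ)..(-lam * t), Real.exp x)
            = Real.exp (-lam * t) - Real.exp 0 := by simp
        rw [e3, smul_eq_mul, Real.exp_zero, show -lam * t = -(lam * t) by ring]
        field_simp [hlam.ne']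
        ring
      rw [hval]
      have : 0 < Real.exp (-(lam * t)) := Real.exp_pos _
      rw [div_le_div_iff₀ hlam hlam]
      nlinarith
    have hGsq : ∀ s : ℝ, G s ^ (2:ℝ) = φ t s := by
      intro s
      show ENNReal.ofReal (Real.exp (-(lam * (t - s)) / 2) * ‖h s (t - s)‖) ^ (2:ℝ)
        = ENNReal.ofReal (Real.exp (-(lam * (t - s)))) * ENNReal.ofReal (‖h s (t - s)‖ ^ (2:ℕ))
      rw [ENNReal.ofReal_rpow_of_nonneg (by positivity) (by norm_num : (0:ℝ) ≤ 2)]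
      rw [show (2:ℝ) = ((2:ℕ):ℝ) by norm_num, Real.rpow_natCast, mul_pow,
        ENNReal.ofReal_mul (by positivity)]
      congr 2
      rw [pow_two, ← Real.exp_add]
      congr 1
      ring
    -- combine
    calc ENNReal.ofReal (‖lam • I‖ ^ (2:ℕ))
        = ENNReal.ofReal lam ^ (2:ℕ) * ENNReal.ofReal ‖I‖ ^ (2:ℕ) := h1
      _ ≤ ENNReal.ofReal lam ^ (2:ℕ) * ((∫⁻ s in Set.Ioc (0:ℝ) t, F s ^ (2:ℝ)) ^ (1/(2:ℝ))
            * (∫⁻ s in Set.Ioc (0:ℝ) t, G s ^ (2:ℝ)) ^ (1/(2:ℝ))) ^ (2:ℕ) := by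
          gcongr
          exact h2.trans h3
      _ = ENNReal.ofReal lam ^ (2:ℕ) * ((∫⁻ s in Set.Ioc (0:ℝ) t, F s ^ (2:ℝ))
            * (∫⁻ s in Set.Ioc (0:ℝ) t, G s ^ (2:ℝ))) := by rw [sq_eq]
      _ ≤ ENNReal.ofReal lam ^ (2:ℕ) * (ENNReal.ofReal (1/lam)
            * (∫⁻ s in Set.Ioc (0:ℝ) t, G s ^ (2:ℝ))) := by gcongr
      _ = ENNReal.ofReal lam * ∫⁻ s in Set.Ioc (0:ℝ) t, φ t s := by
          rw [← mul_assoc, ← ENNReal.ofReal_pow hlam.le, ← ENNReal.ofReal_mul (by positivity)]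
          have : lam ^ (2:ℕ) * (1 / lam) = lam := by
            rw [pow_two, mul_one_div, mul_div_assoc, div_self hlam.ne', mul_one]
          rw [this]
          congr 1
          exact lintegral_congr fun s => hGsq s
  -- integrate the pointwise bound and swap the order of integration
  have step1 : (∫⁻ t in Set.Ioc (0 : ℝ) T, ENNReal.ofReal
        (‖lam • ∫ s in Set.Ioc (0 : ℝ) t,
            Real.exp (-(lam * (t - s))) • h s (t - s)‖ ^ (2 : ℕ)))
      ≤ ENNReal.ofReal lam *
          ∫⁻ t in Set.Ioc (0:ℝ) T, ∫⁻ s in Set.Ioc (0:ℝ) t, φ t s := by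
    rw [← lintegral_const_mul' _ _ ENNReal.ofReal_ne_top]
    exact setLIntegral_mono' measurableSet_Ioc key
  refine step1.trans ?_
  apply mul_le_mul_right
  -- now the double-integral estimate
  have eqT : ∀ t ∈ Set.Ioc (0:ℝ) T, (∫⁻ s in Set.Ioc (0:ℝ) t, φ t s)
      = ∫⁻ s in Set.Ioc (0:ℝ) T, (Set.Iic t).indicator (φ t) s := by
    intro t ht
    have hset : Set.Iic t ∩ Set.Ioc (0:ℝ) T = Set.Ioc (0:ℝ) t := by
      ext x
      simp only [Set.mem_inter_iff, Set.mem_Iic, Set.mem_Ioc]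
      constructor
      · rintro ⟨hx, h0, _⟩; exact ⟨h0, hx⟩
      · rintro ⟨h0, hx⟩; exact ⟨hx, h0, hx.trans ht.2⟩
    rw [lintegral_indicator measurableSet_Iic,
      Measure.restrict_restrict measurableSet_Iic, hset]
  calc (∫⁻ t in Set.Ioc (0:ℝ) T, ∫⁻ s in Set.Ioc (0:ℝ) t, φ t s)
      = ∫⁻ t in Set.Ioc (0:ℝ) T, ∫⁻ s in Set.Ioc (0:ℝ) T,
          (Set.Iic t).indicator (φ t) s := setLIntegral_congr_fun measurableSet_Ioc
            eqT
    _ = ∫⁻ s in Set.Ioc (0:ℝ) T, ∫⁻ t in Set.Ioc (0:ℝ) T,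
          (Set.Iic t).indicator (φ t) s := by
        apply lintegral_lintegral_swap
        have : (Function.uncurry fun t s => (Set.Iic t).indicator (φ t) s)
            = {p : ℝ × ℝ | p.2 ≤ p.1}.indicator (fun p => φ p.1 p.2) := by
          ext p
          rcases p with ⟨t, s⟩
          by_cases hst : s ≤ t <;>
            simp [Function.uncurry, Set.indicator_apply, hst]
        rw [this]
        exact (hφm.indicator (measurableSet_le measurable_snd measurable_fst)).aemeasurable
    _ ≤ ∫⁻ s in Set.Ioc (0:ℝ) T, ∫⁻ u in Set.Ioi (0:ℝ),
          ENNReal.ofReal (‖h s u‖ ^ (2:ℕ)) := by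
        refine lintegral_mono fun s => ?_
        calc (∫⁻ t in Set.Ioc (0:ℝ) T, (Set.Iic t).indicator (φ t) s)
            = ∫⁻ t in Set.Ioc (0:ℝ) T, (Set.Ici s).indicator (fun t => φ t s) t := by
              refine lintegral_congr fun t => ?_
              by_cases hst : s ≤ t <;> simp [Set.indicator_apply, hst]
          _ = ∫⁻ t in Set.Ici s ∩ Set.Ioc (0:ℝ) T, φ t s := by
              rw [lintegral_indicator measurableSet_Ici,
                Measure.restrict_restrict measurableSet_Ici]
          _ ≤ ∫⁻ t in Set.Icc s T, φ t s :=
              lintegral_mono_set fun x hx => ⟨hx.1, hx.2.2⟩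
          _ = ∫⁻ u in Set.Icc (0:ℝ) (T - s), φ (u + s) s := by
              have e := (measurePreserving_add_right volume s).setLIntegral_comp_preimage_emb
                (measurableEmbedding_addRight s) (fun t => φ t s) (Set.Icc s T)
              have hset : (fun u : ℝ => u + s) ⁻¹' Set.Icc s T = Set.Icc 0 (T - s) := by
                ext u
                simp only [Set.mem_preimage, Set.mem_Icc]
                constructor <;> intro hu <;> constructor <;> linarith [hu.1, hu.2]
              rw [← e, hset]
          _ ≤ ∫⁻ u in Set.Icc (0:ℝ) (T - s), ENNReal.ofReal (‖h s u‖ ^ (2:ℕ)) := by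
              refine setLIntegral_mono' measurableSet_Icc fun u hu => ?_
              show ENNReal.ofReal (Real.exp (-(lam * (u + s - s))))
                  * ENNReal.ofReal (‖h s (u + s - s)‖ ^ (2:ℕ)) ≤ _
              rw [add_sub_cancel_right]
              calc ENNReal.ofReal (Real.exp (-(lam * u)))
                    * ENNReal.ofReal (‖h s u‖ ^ (2:ℕ))
                  ≤ 1 * ENNReal.ofReal (‖h s u‖ ^ (2:ℕ)) := by
                    apply mul_le_mul'
                    · rw [ENNReal.ofReal_le_one]
                      exact Real.exp_le_one_iff.2
                        (neg_nonpos.2 (mul_nonneg hlam.le hu.1))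
                    · exact le_rfl
                _ = ENNReal.ofReal (‖h s u‖ ^ (2:ℕ)) := one_mul _
          _ = ∫⁻ u in Set.Ioc (0:ℝ) (T - s), ENNReal.ofReal (‖h s u‖ ^ (2:ℕ)) :=
              (setLIntegral_congr MeasureTheory.Ioc_ae_eq_Icc).symm
          _ ≤ ∫⁻ u in Set.Ioi (0:ℝ), ENNReal.ofReal (‖h s u‖ ^ (2:ℕ)) :=
              lintegral_mono_set Set.Ioc_subset_Ioi_self
end
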